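/- arXiv:2311.14051 — 4 statements merged into one kernel-verified Lean document; each statement's English description precedes it below -/
import Mathlib

section
/- Let μ be a Radon measure on ℝⁿ whose heat extension u(x,t) = ∫ (4πt)^{-n/2} exp(-|x-ξ|²/(4t)) dμ(ξ) is finite for all (x,t) ∈ ℝⁿ × (0,∞), and let α ∈ [0,n). Then there exists a constant c(α,n) > 0, independent of μ and x, such that for every x ∈ ℝⁿ, limsup_{t→0⁺} t^{α/2} u(x,t) ≤ c(α,n) · limsup_{r→0⁺} μ(B(x,r)) / r^{n-α}. -/
open MeasureTheory Filter Metric Set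
open scoped ENNReal Topology

noncomputable def heatK (n : ℕ) (x : EuclideanSpace ℝ (Fin n)) (t : ℝ) : ℝ :=
  (4 * Real.pi * t) ^ (-(n : ℝ) / 2) * Real.exp (-‖x‖ ^ 2 / (4 * t))

noncomputable def heatS (n : ℕ) : ℝ := ∑' k : ℕ, ((k : ℝ) + 1) ^ n * Real.exp (-(k : ℝ) ^ 2 / 4)

noncomputable def heatC (n : ℕ) : ℝ := (4 * Real.pi) ^ (-(n : ℝ) / 2) * heatS n

lemma shift_summable (n : ℕ) : Summable (fun k : ℕ => ((k : ℝ) + 1) ^ n * Real.exp (-(1:ℝ)/4) ^ k) := by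
  have hr : ‖Real.exp (-(1:ℝ)/4)‖ < 1 := by
    rw [Real.norm_eq_abs, abs_of_pos (Real.exp_pos _)]
    exact Real.exp_lt_one_iff.2 (by norm_num)
  have h1 : Summable (fun k : ℕ => (k : ℝ) ^ n * Real.exp (-(1:ℝ)/4) ^ k) :=
    summable_pow_mul_geometric_of_norm_lt_one n hr
  have h2 : Summable (fun k : ℕ => ((k+1 : ℕ) : ℝ) ^ n * Real.exp (-(1:ℝ)/4) ^ (k+1)) :=
    (summable_nat_add_iff 1).2 h1
  have := h2.mul_left (Real.exp (-(1:ℝ)/4))⁻¹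
  refine this.congr fun k => ?_
  have hE : Real.exp (-(1:ℝ)/4) ≠ 0 := (Real.exp_pos _).ne'
  push_cast
  rw [pow_succ]
  field_simp

lemma exp_sq_le (k : ℕ) : Real.exp (-(k:ℝ) ^ 2 / 4) ≤ Real.exp (-(1:ℝ)/4) ^ k := by
  rw [← Real.exp_nat_mul]
  apply Real.exp_le_exp.2
  have h : (k:ℝ) ≤ (k:ℝ) ^ 2 := by exact_mod_cast Nat.le_self_pow two_ne_zero k
  linarith

lemma heat_summable (n : ℕ) : Summable (fun k : ℕ => ((k : ℝ) + 1) ^ n * Real.exp (-(k : ℝ) ^ 2 / 4)) := by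
  refine (shift_summable n).of_nonneg_of_le (fun k => by positivity) fun k => ?_
  have h0 : (0:ℝ) ≤ ((k : ℝ) + 1) ^ n := by positivity
  exact mul_le_mul_of_nonneg_left (exp_sq_le k) h0

lemma heatS_pos (n : ℕ) : 0 < heatS n := by
  have := (heat_summable n)
  refine Summable.tsum_pos this (fun k => by positivity) 0 (by positivity)

lemma heatC_pos (n : ℕ) : 0 < heatC n := by
  have h1 := heatS_pos n
  have h2 : (0:ℝ) < (4 * Real.pi) ^ (-(n : ℝ) / 2) :=
    Real.rpow_pos_of_pos (by positivity) _
  exact mul_pos h2 h1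


lemma term_calc (n : ℕ) (α : ℝ) (hα0 : 0 ≤ α) (t : ℝ) (ht : 0 < t)
    (L : ℝ) (hL : 0 ≤ L) (k : ℕ) :
    t ^ (α/2) * ((4*Real.pi*t) ^ (-(n:ℝ)/2) * Real.exp (-(k:ℝ)^2/4) *
        (L * (((k:ℝ)+1) * Real.sqrt t) ^ ((n:ℝ)-α)))
      ≤ (4*Real.pi) ^ (-(n:ℝ)/2) * (L * (((k:ℝ)+1)^n * Real.exp (-(k:ℝ)^2/4))) := by
  have h4π : (0:ℝ) < 4*Real.pi := by positivity
  have e1 : (4*Real.pi*t) ^ (-(n:ℝ)/2) = (4*Real.pi) ^ (-(n:ℝ)/2) * t ^ (-(n:ℝ)/2) :=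
    Real.mul_rpow h4π.le ht.le
  have e2 : (((k:ℝ)+1) * Real.sqrt t) ^ ((n:ℝ)-α)
      = ((k:ℝ)+1) ^ ((n:ℝ)-α) * (Real.sqrt t) ^ ((n:ℝ)-α) :=
    Real.mul_rpow (by positivity) (Real.sqrt_nonneg t)
  have e3 : (Real.sqrt t) ^ ((n:ℝ)-α) = t ^ (((n:ℝ)-α)/2) := by
    rw [Real.sqrt_eq_rpow, ← Real.rpow_mul ht.le]
    congr 1; ring
  have e4 : t ^ (α/2) * (t ^ (-(n:ℝ)/2) * t ^ (((n:ℝ)-α)/2)) = 1 := by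
    rw [← Real.rpow_add ht, ← Real.rpow_add ht]
    have h : α/2 + (-(n:ℝ)/2 + ((n:ℝ)-α)/2) = 0 := by ring
    rw [h, Real.rpow_zero]
  have e5 : ((k:ℝ)+1) ^ ((n:ℝ)-α) ≤ ((k:ℝ)+1) ^ n := by
    rw [← Real.rpow_natCast ((k:ℝ)+1) n]
    exact Real.rpow_le_rpow_of_exponent_le (by linarith [Nat.cast_nonneg (α:=ℝ) k])
      (by linarith)
  calc t ^ (α/2) * ((4*Real.pi*t) ^ (-(n:ℝ)/2) * Real.exp (-(k:ℝ)^2/4) *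
        (L * (((k:ℝ)+1) * Real.sqrt t) ^ ((n:ℝ)-α)))
      = ((4*Real.pi) ^ (-(n:ℝ)/2) * (L * (((k:ℝ)+1) ^ ((n:ℝ)-α) * Real.exp (-(k:ℝ)^2/4)))) *
          (t ^ (α/2) * (t ^ (-(n:ℝ)/2) * t ^ (((n:ℝ)-α)/2))) := by
        rw [e1, e2, e3]; ring
    _ = (4*Real.pi) ^ (-(n:ℝ)/2) * (L * (((k:ℝ)+1) ^ ((n:ℝ)-α) * Real.exp (-(k:ℝ)^2/4))) := by
        rw [e4, mul_one]
    _ ≤ (4*Real.pi) ^ (-(n:ℝ)/2) * (L * (((k:ℝ)+1)^n * Real.exp (-(k:ℝ)^2/4))) := by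
        have h1 : (0:ℝ) ≤ (4*Real.pi) ^ (-(n:ℝ)/2) := (Real.rpow_pos_of_pos h4π _).le
        have h2 : (0:ℝ) ≤ Real.exp (-(k:ℝ)^2/4) := (Real.exp_pos _).le
        nlinarith [mul_le_mul_of_nonneg_left (mul_le_mul_of_nonneg_right e5 h2) hL]

lemma heatK_cont (n : ℕ) (x : EuclideanSpace ℝ (Fin n)) (t : ℝ) :
    Continuous fun ξ : EuclideanSpace ℝ (Fin n) => ENNReal.ofReal (heatK n (x - ξ) t) := by
  apply ENNReal.continuous_ofReal.comp
  unfold heatK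
  fun_prop

-- cover of the ball by annuli
lemma ball_cover (x : EuclideanSpace ℝ (Fin n)) (s r₀ : ℝ) (hs : 0 < s) :
    ball x r₀ = ⋃ k : ℕ, ((ball x (((k:ℝ)+1)*s) \ ball x ((k:ℝ)*s)) ∩ ball x r₀) := by
  ext y
  simp only [mem_iUnion, mem_inter_iff, mem_diff, mem_ball]
  constructor
  · intro hy
    refine ⟨⌊dist y x / s⌋₊, ⟨⟨?_, ?_⟩, hy⟩⟩
    · have h1 : dist y x / s < ⌊dist y x / s⌋₊ + 1 := Nat.lt_floor_add_one _
      calc dist y x = (dist y x / s) * s := by field_simp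
        _ < ((⌊dist y x / s⌋₊ : ℝ) + 1) * s := by
            exact mul_lt_mul_of_pos_right h1 hs
    · intro hlt
      have h2 : (⌊dist y x / s⌋₊ : ℝ) ≤ dist y x / s :=
        Nat.floor_le (by positivity)
      have h3 : (⌊dist y x / s⌋₊ : ℝ) * s ≤ (dist y x / s) * s :=
        mul_le_mul_of_nonneg_right h2 hs.le
      rw [div_mul_cancel₀ (dist y x) hs.ne'] at h3
      linarith
  · rintro ⟨k, ⟨_, h⟩⟩; exact h

lemma near_bound (n : ℕ) (α : ℝ) (hα0 : 0 ≤ α) (hαn : α < n)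
    (μ : Measure (EuclideanSpace ℝ (Fin n))) (x : EuclideanSpace ℝ (Fin n))
    (L : ℝ) (hL : 0 ≤ L) (r₀ : ℝ) (hr₀ : 0 < r₀)
    (hball : ∀ r : ℝ, 0 < r → r ≤ r₀ → μ (ball x r) ≤ ENNReal.ofReal (L * r ^ ((n:ℝ) - α)))
    (t : ℝ) (ht : 0 < t) :
    ENNReal.ofReal (t ^ (α/2)) * ∫⁻ ξ in ball x r₀, ENNReal.ofReal (heatK n (x - ξ) t) ∂μ
      ≤ ENNReal.ofReal ((4*Real.pi) ^ (-(n:ℝ)/2) * (L * heatS n)) := by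
  have hs : 0 < Real.sqrt t := Real.sqrt_pos.2 ht
  set s := Real.sqrt t with hs_def
  set A : ℕ → Set (EuclideanSpace ℝ (Fin n)) :=
    fun k => (ball x (((k:ℝ)+1)*s) \ ball x ((k:ℝ)*s)) ∩ ball x r₀ with hA
  set g : EuclideanSpace ℝ (Fin n) → ℝ≥0∞ := fun ξ => ENNReal.ofReal (heatK n (x - ξ) t) with hg
  have hI : ∫⁻ ξ in ball x r₀, g ξ ∂μ ≤ ∑' k, ∫⁻ ξ in A k, g ξ ∂μ := by
    rw [ball_cover x s r₀ hs]
    exact lintegral_iUnion_le _ _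
  have hπt : (0:ℝ) ≤ (4*Real.pi*t) ^ (-(n:ℝ)/2) := Real.rpow_nonneg (by positivity) _
  have hterm : ∀ k : ℕ, ∫⁻ ξ in A k, g ξ ∂μ ≤
      ENNReal.ofReal ((4*Real.pi*t) ^ (-(n:ℝ)/2) * Real.exp (-(k:ℝ)^2/4)) *
        ENNReal.ofReal (L * (((k:ℝ)+1)*s) ^ ((n:ℝ)-α)) := by
    intro k
    have hgb : ∀ ξ ∈ A k, g ξ ≤
        ENNReal.ofReal ((4*Real.pi*t) ^ (-(n:ℝ)/2) * Real.exp (-(k:ℝ)^2/4)) := by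
      intro ξ hξ
      apply ENNReal.ofReal_le_ofReal
      unfold heatK
      have hd : (k:ℝ)*s ≤ ‖x - ξ‖ := by
        have h1 := hξ.1.2
        rw [mem_ball, not_lt] at h1
        rw [← dist_eq_norm, dist_comm]
        exact h1
      have hsq : (k:ℝ)^2 * t ≤ ‖x - ξ‖^2 := by
        have h2 : ((k:ℝ)*s)^2 ≤ ‖x-ξ‖^2 := by
          apply pow_le_pow_left₀ (by positivity) hd
        have h3 : ((k:ℝ)*s)^2 = (k:ℝ)^2 * t := by
          rw [mul_pow, hs_def, Real.sq_sqrt ht.le]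
        linarith
      apply mul_le_mul_of_nonneg_left _ hπt
      apply Real.exp_le_exp.2
      rw [div_le_div_iff₀ (by linarith : (0:ℝ) < 4*t) (by norm_num : (0:ℝ) < 4)]
      nlinarith
    have hμA : μ (A k) ≤ ENNReal.ofReal (L * (((k:ℝ)+1)*s) ^ ((n:ℝ)-α)) := by
      have hsub : A k ⊆ ball x (min (((k:ℝ)+1)*s) r₀) := by
        intro ξ hξ
        rw [mem_ball, lt_min_iff]
        refine ⟨?_, hξ.2⟩
        have := hξ.1.1
        rwa [mem_ball] at this
      calc μ (A k) ≤ μ (ball x (min (((k:ℝ)+1)*s) r₀)) := measure_mono hsub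
        _ ≤ ENNReal.ofReal (L * (min (((k:ℝ)+1)*s) r₀) ^ ((n:ℝ)-α)) :=
            hball _ (lt_min (by positivity) hr₀) (min_le_right _ _)
        _ ≤ ENNReal.ofReal (L * (((k:ℝ)+1)*s) ^ ((n:ℝ)-α)) := by
            apply ENNReal.ofReal_le_ofReal
            apply mul_le_mul_of_nonneg_left _ hL
            apply Real.rpow_le_rpow (le_min (by positivity) hr₀.le) (min_le_left _ _)
              (by linarith)
    calc ∫⁻ ξ in A k, g ξ ∂μ
        ≤ ∫⁻ _ in A k, ENNReal.ofReal ((4*Real.pi*t) ^ (-(n:ℝ)/2) * Real.exp (-(k:ℝ)^2/4)) ∂μ :=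
          setLIntegral_mono measurable_const hgb
      _ = ENNReal.ofReal ((4*Real.pi*t) ^ (-(n:ℝ)/2) * Real.exp (-(k:ℝ)^2/4)) * μ (A k) :=
          setLIntegral_const _ _
      _ ≤ _ := mul_le_mul_right hμA _
  calc ENNReal.ofReal (t ^ (α/2)) * ∫⁻ ξ in ball x r₀, g ξ ∂μ
      ≤ ENNReal.ofReal (t ^ (α/2)) * ∑' k, ∫⁻ ξ in A k, g ξ ∂μ := mul_le_mul_right hI _
    _ = ∑' k, ENNReal.ofReal (t ^ (α/2)) * ∫⁻ ξ in A k, g ξ ∂μ := ENNReal.tsum_mul_left.symm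
    _ ≤ ∑' k : ℕ, ENNReal.ofReal ((4*Real.pi) ^ (-(n:ℝ)/2) *
          (L * (((k:ℝ)+1)^n * Real.exp (-(k:ℝ)^2/4)))) := by
        apply ENNReal.tsum_le_tsum
        intro k
        calc ENNReal.ofReal (t ^ (α/2)) * ∫⁻ ξ in A k, g ξ ∂μ
            ≤ ENNReal.ofReal (t ^ (α/2)) *
              (ENNReal.ofReal ((4*Real.pi*t) ^ (-(n:ℝ)/2) * Real.exp (-(k:ℝ)^2/4)) *
                ENNReal.ofReal (L * (((k:ℝ)+1)*s) ^ ((n:ℝ)-α))) := mul_le_mul_right (hterm k) _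
          _ = ENNReal.ofReal (t ^ (α/2) * ((4*Real.pi*t) ^ (-(n:ℝ)/2) * Real.exp (-(k:ℝ)^2/4) *
                (L * (((k:ℝ)+1)*s) ^ ((n:ℝ)-α)))) := by
              rw [← ENNReal.ofReal_mul (by positivity), ← ENNReal.ofReal_mul (by positivity)]
          _ ≤ _ := ENNReal.ofReal_le_ofReal (term_calc n α hα0 t ht L hL k)
    _ = ENNReal.ofReal ((4*Real.pi) ^ (-(n:ℝ)/2) * (L * heatS n)) := by
        rw [← ENNReal.ofReal_tsum_of_nonneg (fun k => by positivity)
          (((heat_summable n).mul_left L).mul_left _)]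
        congr 1
        rw [tsum_mul_left, tsum_mul_left, heatS]

lemma rpow_exp_tendsto (β c : ℝ) (hc : 0 < c) :
    Tendsto (fun t : ℝ => t ^ β * Real.exp (-c / t)) (𝓝[>] (0:ℝ)) (𝓝 0) := by
  have h := (tendsto_rpow_mul_exp_neg_mul_atTop_nhds_zero (-β) c hc).comp
    tendsto_inv_nhdsGT_zero
  apply h.congr'
  filter_upwards [self_mem_nhdsWithin] with t ht
  have ht' : (0:ℝ) < t := ht
  simp only [Function.comp_apply]
  rw [Real.inv_rpow ht'.le, Real.rpow_neg ht'.le, inv_inv]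
  congr 1

lemma far_tendsto (n : ℕ) (α : ℝ)
    (μ : Measure (EuclideanSpace ℝ (Fin n))) (x : EuclideanSpace ℝ (Fin n))
    (r₀ : ℝ) (hr₀ : 0 < r₀)
    (hfin : (∫⁻ ξ, ENNReal.ofReal (heatK n (x - ξ) 1) ∂μ) ≠ ⊤) :
    Tendsto (fun t : ℝ => ENNReal.ofReal (t ^ (α/2)) *
        ∫⁻ ξ in (ball x r₀)ᶜ, ENNReal.ofReal (heatK n (x - ξ) t) ∂μ)
      (𝓝[>] (0:ℝ)) (𝓝 0) := by
  set M : ℝ≥0∞ := ∫⁻ ξ, ENNReal.ofReal (Real.exp (-‖x - ξ‖^2 / 4)) ∂μ with hM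
  have hπ : (0:ℝ) < (4 * Real.pi) ^ (-(n:ℝ)/2) := Real.rpow_pos_of_pos (by positivity) _
  have hMfin : M ≠ ⊤ := by
    have heq : ∀ ξ : EuclideanSpace ℝ (Fin n),
        ENNReal.ofReal (Real.exp (-‖x - ξ‖^2 / 4)) =
          ENNReal.ofReal (((4 * Real.pi) ^ (-(n:ℝ)/2))⁻¹) *
            ENNReal.ofReal (heatK n (x - ξ) 1) := by
      intro ξ
      rw [← ENNReal.ofReal_mul (by positivity)]
      congr 1
      unfold heatK
      rw [mul_one, mul_one]
      field_simp
    rw [hM]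
    simp_rw [heq]
    rw [lintegral_const_mul' _ _ ENNReal.ofReal_ne_top]
    exact ENNReal.mul_ne_top ENNReal.ofReal_ne_top hfin
  -- upper bound function
  set φ : ℝ → ℝ := fun t =>
    (4 * Real.pi) ^ (-(n:ℝ)/2) * Real.exp (r₀^2/4) * (t ^ ((α - n)/2) * Real.exp (-(r₀^2/4) / t))
    with hφ
  have hφ0 : Tendsto φ (𝓝[>] (0:ℝ)) (𝓝 0) := by
    have := (rpow_exp_tendsto ((α - n)/2) (r₀^2/4) (by positivity)).const_mul
      ((4 * Real.pi) ^ (-(n:ℝ)/2) * Real.exp (r₀^2/4))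
    simpa [hφ, mul_assoc, mul_zero] using this
  have hub : ∀ᶠ t in 𝓝[>] (0:ℝ),
      ENNReal.ofReal (t ^ (α/2)) *
        ∫⁻ ξ in (ball x r₀)ᶜ, ENNReal.ofReal (heatK n (x - ξ) t) ∂μ
      ≤ ENNReal.ofReal (φ t) * M := by
    filter_upwards [Ioo_mem_nhdsGT (by norm_num : (0:ℝ) < 1)] with t ht
    obtain ⟨ht0, ht1⟩ := ht
    have hC : ∀ ξ : EuclideanSpace ℝ (Fin n), ξ ∈ (ball x r₀)ᶜ →
        ENNReal.ofReal (heatK n (x - ξ) t) ≤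
          ENNReal.ofReal ((4 * Real.pi * t) ^ (-(n:ℝ)/2) * Real.exp (r₀^2/4) *
              Real.exp (-(r₀^2/4) / t)) *
            ENNReal.ofReal (Real.exp (-‖x - ξ‖^2 / 4)) := by
      intro ξ hξ
      have hd : r₀ ≤ ‖x - ξ‖ := by
        have h1 : ¬ dist ξ x < r₀ := hξ
        rw [not_lt] at h1
        rw [← dist_eq_norm, dist_comm]
        exact h1
      have hd2 : r₀^2 ≤ ‖x - ξ‖^2 := by nlinarith [norm_nonneg (x - ξ)]
      rw [← ENNReal.ofReal_mul (by positivity)]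
      apply ENNReal.ofReal_le_ofReal
      unfold heatK
      have hexp : Real.exp (-‖x - ξ‖^2 / (4*t)) ≤
          Real.exp (r₀^2/4) * (Real.exp (-(r₀^2/4)/t) * Real.exp (-‖x - ξ‖^2/4)) := by
        rw [← Real.exp_add, ← Real.exp_add]
        apply Real.exp_le_exp.2
        have key : -‖x - ξ‖^2/(4*t) - (-‖x - ξ‖^2/4) ≤ r₀^2/4 - (r₀^2/4)/t := by
          have h2 : -‖x - ξ‖^2/(4*t) - (-‖x - ξ‖^2/4) = (‖x - ξ‖^2/4) * (1 - 1/t) := by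
            field_simp
            ring
          have h3 : r₀^2/4 - (r₀^2/4)/t = (r₀^2/4) * (1 - 1/t) := by ring
          rw [h2, h3]
          have h4 : 1 - 1/t ≤ 0 := by
            have : 1 ≤ 1/t := by
              rw [le_div_iff₀ ht0]
              linarith
            linarith
          apply mul_le_mul_of_nonpos_right _ h4
          nlinarith
        have hrw : -(r₀^2/4)/t = -(r₀^2/4/t) := by ring
        rw [hrw]
        linarith
      calc (4*Real.pi*t) ^ (-(n:ℝ)/2) * Real.exp (-‖x - ξ‖^2 / (4*t))
          ≤ (4*Real.pi*t) ^ (-(n:ℝ)/2) *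
            (Real.exp (r₀^2/4) * (Real.exp (-(r₀^2/4)/t) * Real.exp (-‖x - ξ‖^2/4))) :=
          mul_le_mul_of_nonneg_left hexp (Real.rpow_nonneg (by positivity) _)
        _ = (4*Real.pi*t) ^ (-(n:ℝ)/2) * Real.exp (r₀^2/4) * Real.exp (-(r₀^2/4)/t) *
            Real.exp (-‖x - ξ‖^2/4) := by ring
    calc ENNReal.ofReal (t ^ (α/2)) *
          ∫⁻ ξ in (ball x r₀)ᶜ, ENNReal.ofReal (heatK n (x - ξ) t) ∂μ
        ≤ ENNReal.ofReal (t ^ (α/2)) *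
          ∫⁻ ξ in (ball x r₀)ᶜ,
            (ENNReal.ofReal ((4 * Real.pi * t) ^ (-(n:ℝ)/2) * Real.exp (r₀^2/4) *
                Real.exp (-(r₀^2/4) / t)) *
              ENNReal.ofReal (Real.exp (-‖x - ξ‖^2 / 4))) ∂μ := by
          apply mul_le_mul_right
          apply setLIntegral_mono' measurableSet_ball.compl hC
        _ = ENNReal.ofReal (t ^ (α/2)) *
            (ENNReal.ofReal ((4 * Real.pi * t) ^ (-(n:ℝ)/2) * Real.exp (r₀^2/4) *
                Real.exp (-(r₀^2/4) / t)) *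
              ∫⁻ ξ in (ball x r₀)ᶜ, ENNReal.ofReal (Real.exp (-‖x - ξ‖^2 / 4)) ∂μ) := by
          rw [lintegral_const_mul' _ _ ENNReal.ofReal_ne_top]
        _ ≤ ENNReal.ofReal (t ^ (α/2)) *
            (ENNReal.ofReal ((4 * Real.pi * t) ^ (-(n:ℝ)/2) * Real.exp (r₀^2/4) *
                Real.exp (-(r₀^2/4) / t)) * M) := by
          apply mul_le_mul_right
          apply mul_le_mul_right
          exact setLIntegral_le_lintegral _ _
        _ = ENNReal.ofReal (t ^ (α/2) * ((4 * Real.pi * t) ^ (-(n:ℝ)/2) * Real.exp (r₀^2/4) *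
              Real.exp (-(r₀^2/4) / t))) * M := by
          rw [← mul_assoc, ← ENNReal.ofReal_mul (by positivity)]
        _ = ENNReal.ofReal (φ t) * M := by
          congr 2
          simp only [hφ]
          have e1 : (4*Real.pi*t) ^ (-(n:ℝ)/2) =
              (4*Real.pi) ^ (-(n:ℝ)/2) * t ^ (-(n:ℝ)/2) :=
            Real.mul_rpow (by positivity) ht0.le
          have e2 : t ^ (α/2) * t ^ (-(n:ℝ)/2) = t ^ ((α - n)/2) := by
            rw [← Real.rpow_add ht0]
            congr 1
            ring
          rw [e1, ← e2]
          ring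
  have hlb : ∀ᶠ t in 𝓝[>] (0:ℝ), (0:ℝ≥0∞) ≤ ENNReal.ofReal (t ^ (α/2)) *
      ∫⁻ ξ in (ball x r₀)ᶜ, ENNReal.ofReal (heatK n (x - ξ) t) ∂μ :=
    Eventually.of_forall fun _ => zero_le
  have hup : Tendsto (fun t => ENNReal.ofReal (φ t) * M) (𝓝[>] (0:ℝ)) (𝓝 0) := by
    have h1 : Tendsto (fun t => ENNReal.ofReal (φ t)) (𝓝[>] (0:ℝ)) (𝓝 0) := by
      rw [← ENNReal.ofReal_zero]
      exact (ENNReal.continuous_ofReal.tendsto 0).comp hφ0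
    have := ENNReal.Tendsto.mul_const h1 (Or.inr hMfin)
    simpa using this
  exact tendsto_of_tendsto_of_tendsto_of_le_of_le' tendsto_const_nhds hup hlb hub

lemma mainEst (n : ℕ) (α : ℝ) (hα0 : 0 ≤ α) (hαn : α < n)
    (μ : Measure (EuclideanSpace ℝ (Fin n))) (x : EuclideanSpace ℝ (Fin n))
    (hfin : (∫⁻ ξ, ENNReal.ofReal (heatK n (x - ξ) 1) ∂μ) ≠ ⊤)
    (L : ℝ) (hL : 0 ≤ L) (r₀ : ℝ) (hr₀ : 0 < r₀)
    (hball : ∀ r : ℝ, 0 < r → r ≤ r₀ → μ (ball x r) ≤ ENNReal.ofReal (L * r ^ ((n:ℝ) - α))) :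
    limsup (fun t : ℝ => ENNReal.ofReal (t ^ (α/2)) *
        ∫⁻ ξ, ENNReal.ofReal (heatK n (x - ξ) t) ∂μ) (𝓝[>] (0:ℝ))
      ≤ ENNReal.ofReal ((4*Real.pi) ^ (-(n:ℝ)/2) * (L * heatS n)) := by
  set c : ℝ≥0∞ := ENNReal.ofReal ((4*Real.pi) ^ (-(n:ℝ)/2) * (L * heatS n)) with hc
  set F : ℝ → ℝ≥0∞ := fun t => ENNReal.ofReal (t ^ (α/2)) *
    ∫⁻ ξ in (ball x r₀)ᶜ, ENNReal.ofReal (heatK n (x - ξ) t) ∂μ with hF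
  have hbound : ∀ᶠ t in 𝓝[>] (0:ℝ),
      ENNReal.ofReal (t ^ (α/2)) * ∫⁻ ξ, ENNReal.ofReal (heatK n (x - ξ) t) ∂μ
        ≤ c + F t := by
    filter_upwards [self_mem_nhdsWithin] with t ht
    have ht' : (0:ℝ) < t := ht
    have hsplit : (∫⁻ ξ, ENNReal.ofReal (heatK n (x - ξ) t) ∂μ)
        = (∫⁻ ξ in ball x r₀, ENNReal.ofReal (heatK n (x - ξ) t) ∂μ)
          + ∫⁻ ξ in (ball x r₀)ᶜ, ENNReal.ofReal (heatK n (x - ξ) t) ∂μ :=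
      (lintegral_add_compl _ measurableSet_ball).symm
    rw [hsplit, mul_add]
    exact add_le_add_left (near_bound n α hα0 hαn μ x L hL r₀ hr₀ hball t ht') _
  have hFt : Tendsto F (𝓝[>] (0:ℝ)) (𝓝 0) := far_tendsto n α μ x r₀ hr₀ hfin
  have h2 : Tendsto (fun t => c + F t) (𝓝[>] (0:ℝ)) (𝓝 (c + 0)) :=
    tendsto_const_nhds.add hFt
  calc limsup (fun t : ℝ => ENNReal.ofReal (t ^ (α/2)) *
        ∫⁻ ξ, ENNReal.ofReal (heatK n (x - ξ) t) ∂μ) (𝓝[>] (0:ℝ))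
      ≤ limsup (fun t => c + F t) (𝓝[>] (0:ℝ)) := limsup_le_limsup hbound
    _ = c + 0 := h2.limsup_eq
    _ = c := add_zero c

theorem stmt1 (n : ℕ) (α : ℝ) (hα : α ∈ Ico (0 : ℝ) n) :
    ∃ c : ℝ, 0 < c ∧
      ∀ μ : Measure (EuclideanSpace ℝ (Fin n)),
        (∀ (x : EuclideanSpace ℝ (Fin n)) (t : ℝ), 0 < t →
          (∫⁻ ξ, ENNReal.ofReal (heatK n (x - ξ) t) ∂μ) ≠ ⊤) →
        ∀ x : EuclideanSpace ℝ (Fin n),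
          limsup (fun t : ℝ =>
              ENNReal.ofReal (t ^ (α / 2)) *
                ∫⁻ ξ, ENNReal.ofReal (heatK n (x - ξ) t) ∂μ)
            (nhdsWithin 0 (Ioi 0)) ≤
          ENNReal.ofReal c *
            limsup (fun r : ℝ => μ (ball x r) / ENNReal.ofReal (r ^ (n - α)))
              (nhdsWithin 0 (Ioi 0)) := by
  obtain ⟨hα0, hαn⟩ := hα
  refine ⟨heatC n, heatC_pos n, ?_⟩
  intro μ hμ x
  set c' : ℝ≥0∞ := ENNReal.ofReal (heatC n) with hc'
  have hc0 : c' ≠ 0 := (ENNReal.ofReal_pos.2 (heatC_pos n)).ne'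
  have hct : c' ≠ ⊤ := ENNReal.ofReal_ne_top
  set D := limsup (fun r : ℝ => μ (ball x r) / ENNReal.ofReal (r ^ ((n:ℝ) - α)))
    (𝓝[>] (0:ℝ)) with hD
  by_cases hDtop : D = ⊤
  · rw [hDtop, ENNReal.mul_top hc0]
    exact le_top
  · have key : ∀ b : ℝ≥0∞, D < b → b ≠ ⊤ →
        limsup (fun t : ℝ => ENNReal.ofReal (t ^ (α / 2)) *
          ∫⁻ ξ, ENNReal.ofReal (heatK n (x - ξ) t) ∂μ) (𝓝[>] (0:ℝ)) ≤ c' * b := by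
      intro b hb hbt
      have hev : ∀ᶠ r in 𝓝[>] (0:ℝ),
          μ (ball x r) / ENNReal.ofReal (r ^ ((n:ℝ) - α)) < b :=
        eventually_lt_of_limsup_lt hb
      obtain ⟨r₁, hr₁, hsub⟩ := mem_nhdsGT_iff_exists_Ioo_subset.1 hev
      have hr₁' : (0:ℝ) < r₁ := hr₁
      set L := b.toReal with hL
      have hball : ∀ r : ℝ, 0 < r → r ≤ r₁/2 →
          μ (ball x r) ≤ ENNReal.ofReal (L * r ^ ((n:ℝ) - α)) := by
        intro r h0 hle
        have hmem : r ∈ Ioo (0:ℝ) r₁ := ⟨h0, by linarith⟩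
        have hlt := hsub hmem
        simp only [mem_setOf_eq] at hlt
        have hpos : ENNReal.ofReal (r ^ ((n:ℝ) - α)) ≠ 0 :=
          (ENNReal.ofReal_pos.2 (Real.rpow_pos_of_pos h0 _)).ne'
        rw [ENNReal.div_lt_iff (Or.inl hpos) (Or.inl ENNReal.ofReal_ne_top)] at hlt
        calc μ (ball x r) ≤ b * ENNReal.ofReal (r ^ ((n:ℝ) - α)) := hlt.le
          _ = ENNReal.ofReal (L * r ^ ((n:ℝ) - α)) := by
              rw [ENNReal.ofReal_mul ENNReal.toReal_nonneg, ENNReal.ofReal_toReal hbt]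
      have hmain := mainEst n α hα0 hαn μ x (hμ x 1 one_pos) L ENNReal.toReal_nonneg
        (r₁/2) (by linarith) hball
      calc limsup (fun t : ℝ => ENNReal.ofReal (t ^ (α / 2)) *
            ∫⁻ ξ, ENNReal.ofReal (heatK n (x - ξ) t) ∂μ) (𝓝[>] (0:ℝ))
          ≤ ENNReal.ofReal ((4*Real.pi) ^ (-(n:ℝ)/2) * (L * heatS n)) := hmain
        _ = ENNReal.ofReal (heatC n * L) := by
            rw [heatC]; ring_nf
        _ = c' * ENNReal.ofReal L := by
            rw [hc', ← ENNReal.ofReal_mul (heatC_pos n).le]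
        _ = c' * b := by rw [hL, ENNReal.ofReal_toReal hbt]
    apply ENNReal.le_of_forall_pos_le_add
    intro ε hε _
    have hεc : (ε : ℝ≥0∞) / c' ≠ 0 := by
      simp [ENNReal.div_ne_zero, hε.ne', hct]
    have hb : D < D + (ε : ℝ≥0∞) / c' := ENNReal.lt_add_right hDtop hεc
    have hbt : D + (ε : ℝ≥0∞) / c' ≠ ⊤ := by
      apply ENNReal.add_ne_top.2
      exact ⟨hDtop, (ENNReal.div_lt_top ENNReal.coe_ne_top hc0).ne⟩
    calc limsup (fun t : ℝ => ENNReal.ofReal (t ^ (α / 2)) *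
          ∫⁻ ξ, ENNReal.ofReal (heatK n (x - ξ) t) ∂μ) (𝓝[>] (0:ℝ))
        ≤ c' * (D + (ε : ℝ≥0∞) / c') := key _ hb hbt
      _ = c' * D + c' * ((ε : ℝ≥0∞) / c') := mul_add _ _ _
      _ = c' * D + ε := by rw [ENNReal.mul_div_cancel hc0 hct]
end

section
/- Let μ be a Borel measure on ℝⁿ (or a complete separable metric measure space), s ≥ 0, and let A = { x : limsup_{r→0⁺} μ(B(x,r))/rˢ = +∞ }. If μ is finite on bounded sets, then Hˢ(A) = 0, where Hˢ is the s-dimensional Hausdorff measure. -/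
open MeasureTheory Filter Metric Set
open scoped ENNReal NNReal Topology

variable {X : Type*} [MetricSpace X] [MeasurableSpace X] [BorelSpace X]
  [TopologicalSpace.SeparableSpace X]

/-- From infinite upper density: arbitrarily small radii with large mass. -/
lemma freq_aux (s : ℝ) (μ : Measure X) {x : X}
    (hx : limsup (fun r : ℝ => μ (ball x r) / ENNReal.ofReal (r ^ s))
      (nhdsWithin 0 (Ioi 0)) = ⊤) (t : ℝ≥0∞) (ht : t ≠ ⊤) {δ : ℝ} (hδ : 0 < δ) :
    ∃ r : ℝ, 0 < r ∧ r < δ ∧ t * ENNReal.ofReal (r ^ s) ≤ μ (ball x r) := by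
  have hfreq : ∃ᶠ r in nhdsWithin (0:ℝ) (Ioi 0),
      t < μ (ball x r) / ENNReal.ofReal (r ^ s) := by
    by_contra h
    rw [not_frequently] at h
    have : limsup (fun r : ℝ => μ (ball x r) / ENNReal.ofReal (r ^ s))
        (nhdsWithin 0 (Ioi 0)) ≤ t := limsup_le_of_le (by isBoundedDefault)
      (h.mono fun r hr => not_lt.mp hr)
    exact ht (top_le_iff.mp (hx ▸ this))
  have hmem : Ioo (0:ℝ) δ ∈ nhdsWithin (0:ℝ) (Ioi 0) :=
    Ioo_mem_nhdsGT_of_mem ⟨le_refl 0, hδ⟩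
  obtain ⟨r, hlt, hr⟩ := (hfreq.and_eventually (eventually_of_mem hmem fun r hr => hr)).exists
  refine ⟨r, hr.1, hr.2, ?_⟩
  have h0 : ENNReal.ofReal (r ^ s) ≠ 0 := by
    simp [ENNReal.ofReal_eq_zero, not_le, Real.rpow_pos_of_pos hr.1 s]
  exact (ENNReal.le_div_iff_mul_le (Or.inl h0) (Or.inl ENNReal.ofReal_ne_top)).mp hlt.le

/-- Vitali covering step: countable disjoint family of heavy balls covering `A` after dilation. -/
lemma cover_aux (s : ℝ) (μ : Measure X) {A : Set X}
    (hA : ∀ x ∈ A, limsup (fun r : ℝ => μ (ball x r) / ENNReal.ofReal (r ^ s))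
      (nhdsWithin 0 (Ioi 0)) = ⊤)
    {x0 : X} {R : ℝ} (hAR : A ⊆ ball x0 R)
    {t : ℝ≥0∞} (ht : t ≠ ⊤) {δ : ℝ} (hδ : 0 < δ) (hδ1 : δ ≤ 1) :
    ∃ (v : Set X) (ρ : X → ℝ), v.Countable ∧ v ⊆ A ∧ (∀ b ∈ v, 0 < ρ b ∧ ρ b < δ) ∧
      (A ⊆ ⋃ b ∈ v, closedBall b (4 * ρ b)) ∧
      t * ∑' b : v, ENNReal.ofReal ((ρ b) ^ s) ≤ μ (ball x0 (R + 1)) := by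
  classical
  have hex : ∀ x : X, x ∈ A → ∃ r : ℝ, 0 < r ∧ r < δ ∧
      t * ENNReal.ofReal (r ^ s) ≤ μ (ball x r) :=
    fun x hx => freq_aux s μ (hA x hx) t ht hδ
  set ρ : X → ℝ := fun x => if h : x ∈ A then (hex x h).choose else 0 with hρdef
  have hρ : ∀ x ∈ A, 0 < ρ x ∧ ρ x < δ ∧ t * ENNReal.ofReal (ρ x ^ s) ≤ μ (ball x (ρ x)) := by
    intro x hx
    simp only [hρdef, dif_pos hx]
    exact (hex x hx).choose_spec
  obtain ⟨u, huA, hdisj, hcov⟩ :=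
    Vitali.exists_disjoint_subfamily_covering_enlargement_closedBall A (fun x => x) ρ 1
      (fun a ha => ((hρ a ha).2.1.le.trans hδ1)) 4 (by norm_num)
  have hucnt : u.Countable :=
    hdisj.countable_of_nonempty_interior fun b hb =>
      ⟨b, ball_subset_interior_closedBall (mem_ball_self (hρ b (huA hb)).1)⟩
  refine ⟨u, ρ, hucnt, huA, fun b hb => ⟨(hρ b (huA hb)).1, (hρ b (huA hb)).2.1⟩, ?_, ?_⟩
  · intro a ha
    obtain ⟨b, hbu, hsub⟩ := hcov a ha
    exact mem_biUnion hbu (hsub (mem_closedBall_self (hρ a ha).1.le))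
  · calc t * ∑' b : u, ENNReal.ofReal ((ρ b) ^ s)
        = ∑' b : u, t * ENNReal.ofReal ((ρ b) ^ s) := ENNReal.tsum_mul_left.symm
      _ ≤ ∑' b : u, μ (ball b (ρ b)) :=
          ENNReal.tsum_le_tsum fun b => (hρ b (huA b.2)).2.2
      _ = μ (⋃ b ∈ u, ball b (ρ b)) :=
          (measure_biUnion hucnt (hdisj.mono fun b => ball_subset_closedBall)
            fun b _ => measurableSet_ball).symm
      _ ≤ μ (ball x0 (R + 1)) := by
          apply measure_mono
          refine iUnion₂_subset fun b hb => ball_subset_ball' ?_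
          have h1 : dist b x0 < R := mem_ball.mp (hAR (huA hb))
          have h2 : ρ b < δ := (hρ b (huA hb)).2.1
          linarith

lemma ediam_closedBall_le (x : X) {r : ℝ} (hr : 0 ≤ r) :
    EMetric.diam (closedBall x r) ≤ ENNReal.ofReal (2 * r) := by
  rw [← Metric.emetric_closedBall hr]
  calc EMetric.diam (EMetric.closedBall x (ENNReal.ofReal r))
      ≤ 2 * ENNReal.ofReal r := EMetric.diam_closedBall
    _ = ENNReal.ofReal (2 * r) := by
        rw [ENNReal.ofReal_mul (by norm_num : (0:ℝ) ≤ 2)]; norm_num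

lemma hmeas_bound (s : ℝ) (hs : 0 ≤ s) (μ : Measure X) {A : Set X}
    (hA : ∀ x ∈ A, limsup (fun r : ℝ => μ (ball x r) / ENNReal.ofReal (r ^ s))
      (nhdsWithin 0 (Ioi 0)) = ⊤)
    {x0 : X} {R : ℝ} (hAR : A ⊆ ball x0 R)
    {t : ℝ≥0∞} (ht0 : t ≠ 0) (ht : t ≠ ⊤) :
    μH[s] A ≤ ENNReal.ofReal (8 ^ s) * μ (ball x0 (R + 1)) / t := by
  classical
  have hex : ∀ m : ℕ, ∃ (v : Set X) (ρ : X → ℝ), v.Countable ∧ v ⊆ A ∧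
      (∀ b ∈ v, 0 < ρ b ∧ ρ b < ((m:ℝ)+1)⁻¹) ∧
      (A ⊆ ⋃ b ∈ v, closedBall b (4 * ρ b)) ∧
      t * ∑' b : v, ENNReal.ofReal ((ρ b) ^ s) ≤ μ (ball x0 (R + 1)) := by
    intro m
    refine cover_aux s μ hA hAR ht (by positivity) ?_
    rw [inv_le_one_iff₀]
    right; push_cast; linarith [Nat.cast_nonneg (α := ℝ) m]
  choose v ρ hcnt hvA hρ hcov hsum using hex
  haveI : ∀ m : ℕ, Countable (v m) := fun m => (hcnt m).to_subtype
  have key : μH[s] A ≤ liminf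
      (fun m => ∑' i : v m, EMetric.diam (closedBall (i:X) (4 * ρ m i)) ^ s) atTop := by
    refine MeasureTheory.Measure.hausdorffMeasure_le_liminf_tsum (β := ℕ)
      (ι := fun m => ↥(v m)) s A (l := atTop)
      (fun m => ENNReal.ofReal (8 * ((m:ℝ)+1)⁻¹)) ?_
      (fun m i => closedBall (i:X) (4 * ρ m i)) ?_ ?_
    · have h1 : Tendsto (fun m : ℕ => 8 * ((m:ℝ)+1)⁻¹) atTop (𝓝 0) := by
        simpa [one_div] using
          (tendsto_one_div_add_atTop_nhds_zero_nat).const_mul (8:ℝ)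
      simpa using ENNReal.tendsto_ofReal h1
    · filter_upwards with m i
      have hρpos := (hρ m i i.2).1
      refine (ediam_closedBall_le _ (by linarith)).trans ?_
      apply ENNReal.ofReal_le_ofReal
      have := (hρ m i i.2).2
      nlinarith [(hρ m i i.2).1]
    · filter_upwards with m
      intro a ha
      obtain ⟨b, hb, hab⟩ := mem_iUnion₂.mp (hcov m ha)
      exact mem_iUnion.mpr ⟨⟨b, hb⟩, hab⟩
  refine key.trans ?_
  have hbound : ∀ m : ℕ,
      (∑' i : v m, EMetric.diam (closedBall (i:X) (4 * ρ m i)) ^ s)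
        ≤ ENNReal.ofReal (8 ^ s) * μ (ball x0 (R + 1)) / t := by
    intro m
    have step1 : ∀ i : v m,
        EMetric.diam (closedBall (i:X) (4 * ρ m i)) ^ s
          ≤ ENNReal.ofReal (8 ^ s) * ENNReal.ofReal ((ρ m i) ^ s) := by
      intro i
      have hρpos := (hρ m i i.2).1
      have h1 : EMetric.diam (closedBall (i:X) (4 * ρ m i))
          ≤ ENNReal.ofReal (8 * ρ m i) := by
        refine (ediam_closedBall_le _ (by positivity)).trans ?_
        apply ENNReal.ofReal_le_ofReal; ring_nf; linarith
      calc EMetric.diam (closedBall (i:X) (4 * ρ m i)) ^ s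
          ≤ ENNReal.ofReal (8 * ρ m i) ^ s := ENNReal.rpow_le_rpow h1 hs
        _ = ENNReal.ofReal ((8 * ρ m i) ^ s) :=
            ENNReal.ofReal_rpow_of_pos (by positivity)
        _ = ENNReal.ofReal (8 ^ s) * ENNReal.ofReal ((ρ m i) ^ s) := by
            rw [Real.mul_rpow (by norm_num) hρpos.le,
              ENNReal.ofReal_mul (by positivity)]
    calc (∑' i : v m, EMetric.diam (closedBall (i:X) (4 * ρ m i)) ^ s)
        ≤ ∑' i : v m, ENNReal.ofReal (8 ^ s) * ENNReal.ofReal ((ρ m i) ^ s) :=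
          ENNReal.tsum_le_tsum step1
      _ = ENNReal.ofReal (8 ^ s) * ∑' i : v m, ENNReal.ofReal ((ρ m i) ^ s) :=
          ENNReal.tsum_mul_left
      _ ≤ ENNReal.ofReal (8 ^ s) * (μ (ball x0 (R + 1)) / t) := by
          gcongr
          rw [ENNReal.le_div_iff_mul_le (Or.inl ht0) (Or.inl ht), mul_comm]
          exact hsum m
      _ = ENNReal.ofReal (8 ^ s) * μ (ball x0 (R + 1)) / t := by
          rw [mul_div_assoc]
  calc liminf (fun m => ∑' i : v m, EMetric.diam (closedBall (i:X) (4 * ρ m i)) ^ s) atTop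
      ≤ liminf (fun _ : ℕ => ENNReal.ofReal (8 ^ s) * μ (ball x0 (R + 1)) / t) atTop :=
        liminf_le_liminf (Eventually.of_forall hbound)
    _ = ENNReal.ofReal (8 ^ s) * μ (ball x0 (R + 1)) / t := liminf_const _


theorem stmt3 (n : ℕ) (s : ℝ) (hs : 0 ≤ s) (μ : Measure (EuclideanSpace ℝ (Fin n)))
    (hloc : ∀ B : Set (EuclideanSpace ℝ (Fin n)), Bornology.IsBounded B → μ B ≠ ⊤) :
    μH[s] {x : EuclideanSpace ℝ (Fin n) |
        limsup (fun r : ℝ => μ (ball x r) / ENNReal.ofReal (r ^ s))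
          (nhdsWithin 0 (Ioi 0)) = ⊤} = 0 := by

  set A := {x : EuclideanSpace ℝ (Fin n) |
      limsup (fun r : ℝ => μ (ball x r) / ENNReal.ofReal (r ^ s))
        (nhdsWithin 0 (Ioi 0)) = ⊤} with hAdef
  have key : ∀ R : ℕ,
      μH[s] (A ∩ ball (0 : EuclideanSpace ℝ (Fin n)) ((R:ℝ)+1)) = 0 := by
    intro R
    set A' := A ∩ ball (0 : EuclideanSpace ℝ (Fin n)) ((R:ℝ)+1) with hA'def
    have hA' : ∀ x ∈ A', limsup (fun r : ℝ => μ (ball x r) / ENNReal.ofReal (r ^ s))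
        (nhdsWithin 0 (Ioi 0)) = ⊤ := fun x hx => hx.1
    have hAR : A' ⊆ ball (0 : EuclideanSpace ℝ (Fin n)) ((R:ℝ)+1) := fun x hx => hx.2
    set C := ENNReal.ofReal (8 ^ s) *
      μ (ball (0 : EuclideanSpace ℝ (Fin n)) ((R:ℝ)+1+1)) with hCdef
    have hC : C ≠ ⊤ :=
      ENNReal.mul_ne_top ENNReal.ofReal_ne_top (hloc _ isBounded_ball)
    have hb : ∀ k : ℕ, μH[s] A' ≤ C / ((k:ℝ≥0∞)+1) := fun k =>
      hmeas_bound s hs μ hA' hAR (t := (k:ℝ≥0∞)+1)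
        (by simp) (by simp [ENNReal.add_ne_top])
    have h1 : Tendsto (fun k : ℕ => ((k:ℝ≥0∞)+1)⁻¹) atTop (𝓝 0) := by
      have h2 := ENNReal.tendsto_inv_nat_nhds_zero.comp (tendsto_add_atTop_nat 1)
      simpa [Function.comp_def] using h2
    have htend : Tendsto (fun k : ℕ => C / ((k:ℝ≥0∞)+1)) atTop (𝓝 0) := by
      simpa [div_eq_mul_inv] using ENNReal.Tendsto.const_mul h1 (Or.inr hC)
    exact le_antisymm (ge_of_tendsto' htend hb) zero_le
  have hsub : A ⊆ ⋃ R : ℕ, A ∩ ball (0 : EuclideanSpace ℝ (Fin n)) ((R:ℝ)+1) := by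
    intro x hx
    obtain ⟨R, hR⟩ := exists_nat_gt (dist x 0)
    exact mem_iUnion.mpr ⟨R, hx, mem_ball.mpr (by linarith)⟩
  exact measure_mono_null hsub (measure_iUnion_null key)
end

section
/- Let u(x,t) = ∫_{ℝⁿ} (4πt)^{-n/2} exp(-|x-ξ|²/(4t)) dμ(ξ) be a nonnegative solution of the heat equation on ℝⁿ × (0,∞) represented by a Radon measure μ, and let α ∈ [0,n]. Then the set S_α(u) = { x ∈ ℝⁿ : limsup_{t→0⁺} t^{α/2} u(x,t) = +∞ } satisfies H^{n-α}(S_α(u)) = 0. -/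
open MeasureTheory Filter Metric Set

open scoped ENNReal Topology NNReal

lemma CS_ne_top (d : ℝ) (hd : 0 ≤ d) :
    (∑' j : ℕ, ENNReal.ofReal ((2:ℝ) ^ (((j:ℝ)+1)*d) * Real.exp (-(4:ℝ)^j/4))) ≠ ⊤ := by
  set f : ℕ → ℝ := fun j => (2:ℝ) ^ (((j:ℝ)+1)*d) * Real.exp (-(4:ℝ)^j/4) with hf
  have h2d : (0:ℝ) < 2 ^ d := Real.rpow_pos_of_pos (by norm_num) d
  have hpos : ∀ j, 0 ≤ f j := by
    intro j
    have := Real.rpow_pos_of_pos (by norm_num : (0:ℝ) < 2) (((j:ℝ)+1)*d)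
    positivity
  have hsum : Summable f := by
    refine summable_of_ratio_norm_eventually_le (r := 1/2) (by norm_num) ?_
    have htend : Tendsto (fun j : ℕ => (2:ℝ) ^ d * Real.exp (-(3 * (4:ℝ)^j / 4)))
        atTop (𝓝 0) := by
      have h4 : Tendsto (fun j : ℕ => 3 * (4:ℝ)^j / 4) atTop atTop := by
        apply Tendsto.atTop_div_const (by norm_num)
        exact Tendsto.const_mul_atTop (by norm_num)
          (tendsto_pow_atTop_atTop_of_one_lt (by norm_num : (1:ℝ) < 4))
      have h5 : Tendsto (fun j : ℕ => Real.exp (-(3 * (4:ℝ)^j / 4))) atTop (𝓝 0) :=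
        Real.tendsto_exp_atBot.comp (tendsto_neg_atBot_iff.mpr h4)
      simpa using h5.const_mul ((2:ℝ) ^ d)
    have hev := htend.eventually_le_const (by norm_num : (0:ℝ) < 1/2)
    filter_upwards [hev] with j hj
    have hfj1 : f (j+1) = f j * ((2:ℝ) ^ d * Real.exp (-(3 * (4:ℝ)^j / 4))) := by
      simp only [hf]
      rw [show (((j:ℕ)+1:ℕ):ℝ) = (j:ℝ)+1 by push_cast; ring]
      rw [show ((j:ℝ)+1+1)*d = ((j:ℝ)+1)*d + d by ring, Real.rpow_add (by norm_num)]
      rw [show (2:ℝ) ^ (((j:ℝ)+1)*d) * Real.exp (-4 ^ j / 4) * (2 ^ d * Real.exp (-(3 * 4 ^ j / 4)))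
          = (2:ℝ) ^ (((j:ℝ)+1)*d) * 2 ^ d * (Real.exp (-4 ^ j / 4) * Real.exp (-(3 * 4 ^ j / 4))) by ring,
        ← Real.exp_add]
      congr 1
      rw [pow_succ]
      ring
    rw [hfj1]
    rw [Real.norm_eq_abs, Real.norm_eq_abs, abs_of_nonneg (by positivity),
      abs_of_nonneg (hpos j)]
    calc f j * ((2:ℝ) ^ d * Real.exp (-(3 * (4:ℝ)^j / 4))) ≤ f j * (1/2) :=
          mul_le_mul_of_nonneg_left hj (hpos j)
      _ = 1/2 * f j := by ring
  rw [← ENNReal.ofReal_tsum_of_nonneg hpos hsum]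
  exact ENNReal.ofReal_ne_top

lemma g_tendsto (n : ℕ) (α : ℝ) (ρ : ℝ) (hρ : 0 < ρ) (P : ℝ) (hP : 0 < P) :
    Tendsto (fun t : ℝ => t ^ (α/2) * (P*t) ^ (-(n:ℝ)/2) * Real.exp (-ρ^2/(4*t) + ρ^2/8))
      (𝓝[>] (0:ℝ)) (𝓝 0) := by
  have hbase : Tendsto (fun y : ℝ => y ^ ((n:ℝ)/2 - α/2) * Real.exp (-(ρ^2/4) * y))
      atTop (𝓝 0) :=
    tendsto_rpow_mul_exp_neg_mul_atTop_nhds_zero _ _ (by positivity)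
  have hconst := hbase.const_mul (P ^ (-(n:ℝ)/2) * Real.exp (ρ^2/8))
  rw [mul_zero] at hconst
  have hcomp := hconst.comp tendsto_inv_nhdsGT_zero
  refine hcomp.congr' ?_
  filter_upwards [self_mem_nhdsWithin] with t (ht : (0:ℝ) < t)
  simp only [Function.comp]
  rw [Real.inv_rpow ht.le, ← Real.rpow_neg ht.le]
  rw [Real.mul_rpow hP.le ht.le, Real.exp_add]
  rw [show -(ρ^2/4) * t⁻¹ = -ρ^2/(4*t) by field_simp]
  rw [show -((n:ℝ)/2 - α/2) = α/2 + (-(n:ℝ)/2) by ring, Real.rpow_add ht]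
  ring

-- per-scale Vitali covering
lemma perScale {X : Type*} [MetricSpace X] [MeasurableSpace X] [BorelSpace X]
    (μ : Measure X) (hb : ∀ (x : X) (R : ℝ), μ (closedBall x R) ≠ ⊤)
    (d : ℝ) (M : ℕ) (x₀ : X) (R : ℕ)
    (T : Set X)
    (hT : ∀ x ∈ T, x ∈ closedBall x₀ (R:ℝ) ∧ ∀ ε : ℝ, 0 < ε → ∃ r : ℝ, 0 < r ∧ r < ε ∧
        ENNReal.ofReal (((M:ℝ)+1) * r ^ d) ≤ μ (closedBall x r))
    (δ : ℝ) (hδ : 0 < δ) (hδ1 : δ ≤ 1) :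
    ∃ (u : Set X) (rad : X → ℝ),
      u.Countable ∧ (∀ b ∈ u, 0 < rad b ∧ rad b ≤ δ) ∧
      (T ⊆ ⋃ b ∈ u, closedBall b (4 * rad b)) ∧
      (u.PairwiseDisjoint fun b => closedBall b (rad b)) ∧
      (∀ b ∈ u, ENNReal.ofReal (((M:ℝ)+1) * rad b ^ d) ≤ μ (closedBall b (rad b))) ∧
      (∀ b ∈ u, closedBall b (rad b) ⊆ closedBall x₀ ((R:ℝ)+1)) := by
  classical
  -- choose radii
  have hrad : ∀ x : X, ∃ r : ℝ, x ∈ T → (0 < r ∧ r < δ ∧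
      ENNReal.ofReal (((M:ℝ)+1) * r ^ d) ≤ μ (closedBall x r)) := by
    intro x
    by_cases hx : x ∈ T
    · obtain ⟨r, hr0, hrδ, hrμ⟩ := (hT x hx).2 δ hδ
      exact ⟨r, fun _ => ⟨hr0, hrδ, hrμ⟩⟩
    · exact ⟨1, fun h => absurd h hx⟩
  choose rad hradp using hrad
  obtain ⟨u, huT, hdisj, hcov⟩ :=
    Vitali.exists_disjoint_subfamily_covering_enlargement_closedBall T id rad δ
      (fun a ha => ((hradp a ha).2.1).le) 4 (by norm_num)
  have hradu : ∀ b ∈ u, 0 < rad b ∧ rad b ≤ δ :=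
    fun b hb => ⟨(hradp b (huT hb)).1, ((hradp b (huT hb)).2.1).le⟩
  have hlow : ∀ b ∈ u, ENNReal.ofReal (((M:ℝ)+1) * rad b ^ d) ≤ μ (closedBall b (rad b)) :=
    fun b hb => (hradp b (huT hb)).2.2
  have hsub : ∀ b ∈ u, closedBall b (rad b) ⊆ closedBall x₀ ((R:ℝ)+1) := by
    intro b hb y hy
    have hbA : dist b x₀ ≤ (R:ℝ) := (hT b (huT hb)).1
    have : dist y b ≤ rad b := hy
    have := (hradu b hb).2
    simp only [mem_closedBall] at *
    calc dist y x₀ ≤ dist y b + dist b x₀ := dist_triangle _ _ _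
      _ ≤ δ + R := by linarith [hy]
      _ ≤ (R:ℝ) + 1 := by linarith
  -- countability
  have hcnt : u.Countable := by
    have hmes : ∀ i : u, MeasurableSet (closedBall (i : X) (rad i)) :=
      fun i => measurableSet_closedBall
    have hpd : Pairwise (Function.onFun Disjoint fun i : u => closedBall (i : X) (rad i)) := by
      intro i j hij
      exact hdisj i.2 j.2 (Subtype.coe_injective.ne hij)
    have hfin : μ (⋃ i : u, closedBall (i : X) (rad i)) ≠ ∞ := by
      refine ne_top_of_le_ne_top (hb x₀ ((R:ℝ)+1)) (measure_mono ?_)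
      exact iUnion_subset fun i => hsub i i.2
    have := Measure.countable_meas_pos_of_disjoint_of_meas_iUnion_ne_top μ hmes hpd hfin
    have hall : {i : u | 0 < μ (closedBall (i : X) (rad i))} = univ := by
      refine eq_univ_of_forall fun i => ?_
      refine lt_of_lt_of_le ?_ (hlow i i.2)
      rw [ENNReal.ofReal_pos]
      have h1 : (0:ℝ) < rad i ^ d := Real.rpow_pos_of_pos (hradu i i.2).1 d
      positivity
    rw [hall] at this
    rw [← Set.countable_coe_iff]
    exact (Set.countable_univ_iff (α := u)).mp this
  refine ⟨u, rad, hcnt, hradu, ?_, hdisj, hlow, hsub⟩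
  intro a ha
  obtain ⟨b, hbu, hab⟩ := hcov a ha
  have : a ∈ closedBall (id a) (rad a) := mem_closedBall_self (hradp a ha).1.le
  exact mem_biUnion hbu (hab this)

lemma densitySet_null {X : Type*} [MetricSpace X] [MeasurableSpace X] [BorelSpace X]
    [Nonempty X] (μ : Measure X) (hb : ∀ (x : X) (R : ℝ), μ (closedBall x R) ≠ ⊤)
    (d : ℝ) (hd : 0 ≤ d) :
    μH[d] {x : X | ∀ M : ℕ, ∀ ε : ℝ, 0 < ε → ∃ r : ℝ, 0 < r ∧ r < ε ∧
        ENNReal.ofReal ((M : ℝ) * r ^ d) ≤ μ (closedBall x r)} = 0 := by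
  classical
  set S := {x : X | ∀ M : ℕ, ∀ ε : ℝ, 0 < ε → ∃ r : ℝ, 0 < r ∧ r < ε ∧
      ENNReal.ofReal ((M : ℝ) * r ^ d) ≤ μ (closedBall x r)} with hS
  obtain ⟨x₀⟩ := (inferInstance : Nonempty X)
  have key : ∀ R : ℕ, μH[d] (S ∩ closedBall x₀ (R:ℝ)) = 0 := by
    intro R
    set C : ℝ≥0∞ := ENNReal.ofReal (8 ^ d) * μ (closedBall x₀ ((R:ℝ)+1)) with hC
    have hCne : C ≠ ⊤ := by
      refine ENNReal.mul_ne_top ENNReal.ofReal_ne_top (hb _ _)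
    have bound : ∀ M : ℕ, μH[d] (S ∩ closedBall x₀ (R:ℝ)) ≤ (((M:ℝ≥0∞))+1)⁻¹ * C := by
      intro M
      have hT : ∀ x ∈ S ∩ closedBall x₀ (R:ℝ), x ∈ closedBall x₀ (R:ℝ) ∧
          ∀ ε : ℝ, 0 < ε → ∃ r : ℝ, 0 < r ∧ r < ε ∧
            ENNReal.ofReal (((M:ℝ)+1) * r ^ d) ≤ μ (closedBall x r) := by
        intro x hx
        refine ⟨hx.2, fun ε hε => ?_⟩
        obtain ⟨r, h1, h2, h3⟩ := hx.1 (M+1) ε hε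
        exact ⟨r, h1, h2, by push_cast at h3 ⊢; exact h3⟩
      have hscale : ∀ m : ℕ, (0:ℝ) < 1/(m+1) ∧ (1:ℝ)/(m+1) ≤ 1 := by
        intro m
        constructor
        · positivity
        · rw [div_le_one (by positivity)]; linarith [Nat.cast_nonneg (α := ℝ) m]
      choose u rad hcnt hradu hcov hdisj hlow hsub using
        fun m : ℕ => perScale μ hb d M x₀ R _ hT (1/(m+1)) (hscale m).1 (hscale m).2
      haveI : ∀ m : ℕ, Countable ↥(u m) := fun m => (hcnt m).to_subtype
      have main := MeasureTheory.Measure.hausdorffMeasure_le_liminf_tsum (X := X) d (S ∩ closedBall x₀ (R:ℝ))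
        (l := atTop) (r := fun m : ℕ => ENNReal.ofReal (8 * (1/(m+1))))
        ?_ (fun m (i : u m) => closedBall (i : X) (4 * rad m i)) ?_ ?_
      · refine main.trans ?_
        have hterm : ∀ m : ℕ, (∑' i : u m, EMetric.diam (closedBall (i:X) (4 * rad m i)) ^ d)
            ≤ (((M:ℝ≥0∞))+1)⁻¹ * C := by
          intro m
          have step1 : ∀ i : u m, EMetric.diam (closedBall (i:X) (4 * rad m i)) ^ d
              ≤ ENNReal.ofReal (8 ^ d) * (((M:ℝ≥0∞))+1)⁻¹ *
                  ((((M:ℝ≥0∞))+1) * ENNReal.ofReal (rad m i ^ d)) := by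
            intro i
            have hr0 : 0 < rad m i := (hradu m i i.2).1
            have hdiam : EMetric.diam (closedBall (i:X) (4 * rad m i))
                ≤ ENNReal.ofReal (8 * rad m i) := by
              refine Metric.ediam_le_of_forall_dist_le fun p hp q hq => ?_
              calc dist p q ≤ dist p (i:X) + dist (i:X) q := dist_triangle _ _ _
                _ ≤ 4 * rad m i + 4 * rad m i := by
                    refine add_le_add hp ?_
                    rw [dist_comm]; exact hq
                _ = 8 * rad m i := by ring
            calc EMetric.diam (closedBall (i:X) (4 * rad m i)) ^ d
                ≤ ENNReal.ofReal (8 * rad m i) ^ d := ENNReal.rpow_le_rpow hdiam hd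
              _ = ENNReal.ofReal ((8 * rad m i) ^ d) :=
                  ENNReal.ofReal_rpow_of_pos (by linarith)
              _ = ENNReal.ofReal (8 ^ d * rad m i ^ d) := by
                  rw [Real.mul_rpow (by norm_num) hr0.le]
              _ = ENNReal.ofReal (8 ^ d) * ENNReal.ofReal (rad m i ^ d) := by
                  rw [ENNReal.ofReal_mul (by positivity)]
              _ = ENNReal.ofReal (8 ^ d) * (((M:ℝ≥0∞))+1)⁻¹ *
                    ((((M:ℝ≥0∞))+1) * ENNReal.ofReal (rad m i ^ d)) := by
                  rw [mul_assoc, ← mul_assoc ((((M:ℝ≥0∞))+1)⁻¹),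
                    ENNReal.inv_mul_cancel (by simp) (by simp), one_mul]
          calc (∑' i : u m, EMetric.diam (closedBall (i:X) (4 * rad m i)) ^ d)
              ≤ ∑' i : u m, ENNReal.ofReal (8 ^ d) * (((M:ℝ≥0∞))+1)⁻¹ *
                  ((((M:ℝ≥0∞))+1) * ENNReal.ofReal (rad m i ^ d)) :=
                ENNReal.tsum_le_tsum step1
            _ = ENNReal.ofReal (8 ^ d) * (((M:ℝ≥0∞))+1)⁻¹ *
                  ∑' i : u m, (((M:ℝ≥0∞))+1) * ENNReal.ofReal (rad m i ^ d) :=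
                ENNReal.tsum_mul_left
            _ ≤ ENNReal.ofReal (8 ^ d) * (((M:ℝ≥0∞))+1)⁻¹ *
                  ∑' i : u m, μ (closedBall (i:X) (rad m i)) := by
                refine mul_le_mul_right (ENNReal.tsum_le_tsum fun i => ?_) _
                have := hlow m i i.2
                rw [ENNReal.ofReal_mul (by positivity), ENNReal.ofReal_add (by positivity) (by norm_num),
                  ENNReal.ofReal_natCast, ENNReal.ofReal_one] at this
                exact this
            _ ≤ ENNReal.ofReal (8 ^ d) * (((M:ℝ≥0∞))+1)⁻¹ * μ (closedBall x₀ ((R:ℝ)+1)) := by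
                refine mul_le_mul_right ?_ _
                refine le_trans (tsum_meas_le_meas_iUnion_of_disjoint μ
                    (fun i : u m => measurableSet_closedBall) ?_) (measure_mono ?_)
                · intro i j hij
                  exact hdisj m i.2 j.2 (Subtype.coe_injective.ne hij)
                · exact iUnion_subset fun i => hsub m i i.2
            _ = (((M:ℝ≥0∞))+1)⁻¹ * C := by rw [hC]; ring
        refine liminf_le_of_frequently_le ?_
        exact Frequently.of_forall hterm
      · -- tendsto r → 0
        rw [show (0:ℝ≥0∞) = ENNReal.ofReal 0 by simp]
        refine ENNReal.tendsto_ofReal ?_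
        have : Tendsto (fun m : ℕ => (1:ℝ)/(m+1)) atTop (𝓝 0) :=
          tendsto_one_div_add_atTop_nhds_zero_nat
        have := this.const_mul 8
        simpa using this
      · -- diam bound
        refine Eventually.of_forall fun m => fun i => ?_
        have hr := hradu m i i.2
        refine le_trans (Metric.ediam_le_of_forall_dist_le
            (C := 8 * rad m (i:X)) fun p hp q hq => ?_) (ENNReal.ofReal_le_ofReal (by nlinarith [hr.1, hr.2]))
        calc dist p q ≤ dist p (i:X) + dist (i:X) q := dist_triangle _ _ _
          _ ≤ 4 * rad m i + 4 * rad m i := by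
              refine add_le_add hp ?_
              rw [dist_comm]; exact hq
          _ = 8 * rad m i := by ring
      · -- coverage
        refine Eventually.of_forall fun m => ?_
        refine (hcov m).trans ?_
        intro y hy
        simp only [mem_iUnion] at hy ⊢
        obtain ⟨b, hb, hyb⟩ := hy
        exact ⟨⟨b, hb⟩, hyb⟩
    -- conclude from bound
    have htend : Tendsto (fun M : ℕ => (((M:ℝ≥0∞))+1)⁻¹ * C) atTop (𝓝 0) := by
      have h1 : Tendsto (fun M : ℕ => ((M:ℝ≥0∞)+1)⁻¹) atTop (𝓝 0) := by
        have := ENNReal.tendsto_inv_nat_nhds_zero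
        have h2 : Tendsto (fun M : ℕ => M + 1) atTop atTop := tendsto_add_atTop_nat 1
        have h3 := this.comp h2
        refine h3.congr fun M => ?_
        simp [Function.comp]
      have := ENNReal.Tendsto.mul_const h1 (Or.inr hCne)
      simpa using this
    have := ge_of_tendsto' htend bound
    exact le_antisymm this (zero_le)
  -- union over R
  have hSsub : S ⊆ ⋃ R : ℕ, S ∩ closedBall x₀ (R:ℝ) := by
    intro x hx
    obtain ⟨R, hR⟩ := exists_nat_ge (dist x x₀)
    exact mem_iUnion.mpr ⟨R, hx, by simpa [mem_closedBall] using hR⟩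
  refine measure_mono_null hSsub ?_
  exact measure_iUnion_null fun R => key R



set_option maxHeartbeats 1000000 in
lemma heat_limsup_ne_top (n : ℕ) (α : ℝ) (hα0 : 0 ≤ α) (hαn : α ≤ n)
    (μ : Measure (EuclideanSpace ℝ (Fin n)))
    (x : EuclideanSpace ℝ (Fin n))
    (hJ : (∫⁻ ξ, ENNReal.ofReal (Real.exp (-‖x - ξ‖ ^ 2 / 8)) ∂μ) ≠ ⊤)
    (M : ℕ) (ε : ℝ) (hε : 0 < ε)
    (hdens : ∀ r : ℝ, 0 < r → r < ε →
      μ (closedBall x r) ≤ ENNReal.ofReal ((M:ℝ) * r ^ ((n:ℝ) - α))) :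
    limsup (fun t : ℝ => ENNReal.ofReal (t ^ (α / 2)) *
        ∫⁻ ξ, ENNReal.ofReal (heatK n (x - ξ) t) ∂μ) (𝓝[>] (0:ℝ)) ≠ ⊤ := by
  have hπ : (0:ℝ) < Real.pi := Real.pi_pos
  set d : ℝ := (n:ℝ) - α with hd'
  have hd : 0 ≤ d := by simp only [hd', sub_nonneg]; exact hαn
  set P : ℝ := 4 * Real.pi with hPdef
  have hP : 0 < P := by positivity
  set ρ : ℝ := ε/2 with hρdef
  have hρ : 0 < ρ := by positivity
  have hρε : ρ < ε := by rw [hρdef]; linarith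
  set J : ℝ≥0∞ := ∫⁻ ξ, ENNReal.ofReal (Real.exp (-‖x - ξ‖ ^ 2 / 8)) ∂μ with hJdef
  set CS : ℝ≥0∞ := ∑' j : ℕ, ENNReal.ofReal ((2:ℝ) ^ (((j:ℝ)+1)*d) * Real.exp (-(4:ℝ)^j/4))
    with hCSdef
  have hCS : CS ≠ ⊤ := CS_ne_top d hd
  set C₀ : ℝ≥0∞ := 1 + ENNReal.ofReal (P ^ (-(n:ℝ)/2) * M) * (1 + CS) with hC₀def
  have hC₀ : C₀ ≠ ⊤ := by
    rw [hC₀def]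
    refine ENNReal.add_ne_top.mpr ⟨ENNReal.one_ne_top, ENNReal.mul_ne_top
      ENNReal.ofReal_ne_top (ENNReal.add_ne_top.mpr ⟨ENNReal.one_ne_top, hCS⟩)⟩
  refine ne_top_of_le_ne_top hC₀ ?_
  refine limsup_le_of_le (by isBoundedDefault) ?_
  -- the function g for the outer estimate
  set g : ℝ → ℝ := fun t => t ^ (α/2) * (P*t) ^ (-(n:ℝ)/2) * Real.exp (-ρ^2/(4*t) + ρ^2/8)
    with hgdef
  have hgJ : Tendsto (fun t => ENNReal.ofReal (g t) * J) (𝓝[>] (0:ℝ)) (𝓝 0) := by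
    have h1 := ENNReal.Tendsto.mul_const
      (ENNReal.tendsto_ofReal (g_tendsto n α ρ hρ P hP)) (Or.inr hJ)
    simpa using h1
  have hev1 : Ioo (0:ℝ) (min 1 (ρ^2)) ∈ 𝓝[>] (0:ℝ) :=
    Ioo_mem_nhdsGT_of_mem ⟨le_refl 0, by positivity⟩
  filter_upwards [hev1, hgJ.eventually_le_const (by norm_num : (0:ℝ≥0∞) < 1)]
    with t htI htg
  obtain ⟨ht0, htm⟩ := htI
  have ht1 : t ≤ 1 := le_of_lt (lt_of_lt_of_le htm (min_le_left _ _))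
  have htρ : t ≤ ρ^2 := le_of_lt (lt_of_lt_of_le htm (min_le_right _ _))
  set s : ℝ := Real.sqrt t with hsdef
  have hs0 : 0 < s := Real.sqrt_pos.mpr ht0
  have hs2 : s^2 = t := Real.sq_sqrt ht0.le
  have hsρ : s ≤ ρ := by
    rw [hsdef]
    calc Real.sqrt t ≤ Real.sqrt (ρ^2) := Real.sqrt_le_sqrt htρ
      _ = ρ := Real.sqrt_sq hρ.le
  have hsε : s < ε := lt_of_le_of_lt hsρ hρε
  -- the constant in front of the kernel
  set cP : ℝ := (P*t) ^ (-(n:ℝ)/2) with hcPdef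
  have hcP : 0 < cP := Real.rpow_pos_of_pos (by positivity) _
  -- key real identity
  have hs_rpow : s ^ d = t ^ (d/2) := by
    rw [hsdef, Real.sqrt_eq_rpow, ← Real.rpow_mul ht0.le]
    congr 1
    ring
  have hkey : t ^ (α/2) * cP * s ^ d = P ^ (-(n:ℝ)/2) := by
    rw [hcPdef, Real.mul_rpow hP.le ht0.le, hs_rpow]
    rw [show t ^ (α/2) * (P ^ (-(n:ℝ)/2) * t ^ (-(n:ℝ)/2)) * t ^ (d/2)
        = P ^ (-(n:ℝ)/2) * (t ^ (α/2) * t ^ (-(n:ℝ)/2) * t ^ (d/2)) by ring]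
    rw [← Real.rpow_add ht0, ← Real.rpow_add ht0,
      show α/2 + -(n:ℝ)/2 + d/2 = 0 by rw [hd']; ring, Real.rpow_zero, mul_one]
  -- the kernel equals cP * exp(...)
  have hker : ∀ ξ : EuclideanSpace ℝ (Fin n),
      heatK n (x - ξ) t = cP * Real.exp (-‖x - ξ‖^2/(4*t)) := by
    intro ξ
    rw [heatK, hcPdef, hPdef]
  -- split the integral
  rw [← lintegral_add_compl (μ := μ) (fun ξ => ENNReal.ofReal (heatK n (x - ξ) t))
    (measurableSet_closedBall (x := x) (ε := ρ)), mul_add]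
  -- outer estimate
  have houter : ENNReal.ofReal (t ^ (α/2)) *
      ∫⁻ ξ in (closedBall x ρ)ᶜ, ENNReal.ofReal (heatK n (x - ξ) t) ∂μ ≤ 1 := by
    have hptwise : ∀ ξ ∈ (closedBall x ρ)ᶜ,
        ENNReal.ofReal (heatK n (x - ξ) t) ≤
          ENNReal.ofReal (cP * Real.exp (-ρ^2/(4*t) + ρ^2/8)) *
            ENNReal.ofReal (Real.exp (-‖x - ξ‖^2/8)) := by
      intro ξ hξ
      have hdist : ρ < dist ξ x := by simpa [mem_closedBall] using hξ
      have ha : ρ^2 ≤ ‖x - ξ‖^2 := by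
        have h1 : ρ ≤ ‖x - ξ‖ := by
          rw [← dist_eq_norm, dist_comm]
          exact hdist.le
        nlinarith [norm_nonneg (x - ξ)]
      rw [hker ξ, ← ENNReal.ofReal_mul (by positivity)]
      refine ENNReal.ofReal_le_ofReal ?_
      rw [mul_assoc, ← Real.exp_add]
      refine mul_le_mul_of_nonneg_left (Real.exp_le_exp.mpr ?_) hcP.le
      have h8 : (0:ℝ) < 4 * t := by linarith
      have hc : 0 ≤ 1/(4*t) - 1/8 := by
        rw [sub_nonneg, div_le_div_iff₀ (by norm_num) h8]
        linarith
      have hprod := mul_nonneg (by linarith : (0:ℝ) ≤ ‖x - ξ‖^2 - ρ^2) hc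
      have e1 : -‖x - ξ‖^2/(4*t) = -(‖x - ξ‖^2 * (1/(4*t))) := by ring
      have e2 : -ρ^2/(4*t) + ρ^2/8 + -‖x - ξ‖^2/8
          = -(ρ^2 * (1/(4*t))) + ρ^2/8 + -(‖x - ξ‖^2/8) := by ring
      nlinarith [hprod]
    calc ENNReal.ofReal (t ^ (α/2)) *
        ∫⁻ ξ in (closedBall x ρ)ᶜ, ENNReal.ofReal (heatK n (x - ξ) t) ∂μ
        ≤ ENNReal.ofReal (t ^ (α/2)) *
          ∫⁻ ξ in (closedBall x ρ)ᶜ, ENNReal.ofReal (cP * Real.exp (-ρ^2/(4*t) + ρ^2/8)) *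
            ENNReal.ofReal (Real.exp (-‖x - ξ‖^2/8)) ∂μ := by
          refine mul_le_mul_right ?_ _
          refine setLIntegral_mono' (measurableSet_closedBall.compl) hptwise
      _ = ENNReal.ofReal (t ^ (α/2)) * (ENNReal.ofReal (cP * Real.exp (-ρ^2/(4*t) + ρ^2/8)) *
            ∫⁻ ξ in (closedBall x ρ)ᶜ, ENNReal.ofReal (Real.exp (-‖x - ξ‖^2/8)) ∂μ) := by
          rw [lintegral_const_mul' _ _ ENNReal.ofReal_ne_top]
      _ ≤ ENNReal.ofReal (t ^ (α/2)) * (ENNReal.ofReal (cP * Real.exp (-ρ^2/(4*t) + ρ^2/8)) * J) := by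
          refine mul_le_mul_right (mul_le_mul_right ?_ _) _
          exact setLIntegral_le_lintegral _ _
      _ = ENNReal.ofReal (g t) * J := by
          rw [← mul_assoc, ← ENNReal.ofReal_mul (by positivity)]
          have hg : g t = t ^ (α/2) * cP * Real.exp (-ρ^2/(4*t) + ρ^2/8) := rfl
          rw [hg]
          ring_nf
      _ ≤ 1 := htg
  -- inner estimate
  have hinner : ENNReal.ofReal (t ^ (α/2)) *
      ∫⁻ ξ in closedBall x ρ, ENNReal.ofReal (heatK n (x - ξ) t) ∂μ ≤
        ENNReal.ofReal (P ^ (-(n:ℝ)/2) * M) * (1 + CS) := by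
    set A : ℕ → Set (EuclideanSpace ℝ (Fin n)) := fun j =>
      {ξ | 2^j * s ≤ dist x ξ} ∩ closedBall x (min (2^(j+1) * s) ρ) with hAdef
    have hAmeas : ∀ j, MeasurableSet (A j) := by
      intro j
      refine MeasurableSet.inter ?_ measurableSet_closedBall
      exact measurableSet_le measurable_const (measurable_const.dist measurable_id)
    have hcover : closedBall x ρ ⊆ closedBall x s ∪ ⋃ j : ℕ, A j := by
      intro ξ hξ
      rw [mem_closedBall] at hξ
      by_cases hcore : dist ξ x ≤ s
      · exact Or.inl hcore
      push_neg at hcore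
      have h1 : 1 ≤ dist x ξ / s := by
        rw [le_div_iff₀ hs0, one_mul, dist_comm]
        exact hcore.le
      obtain ⟨j, hj1, hj2⟩ := exists_nat_pow_near h1 (by norm_num : (1:ℝ) < 2)
      refine Or.inr (mem_iUnion.mpr ⟨j, ?_, ?_⟩)
      · show 2^j * s ≤ dist x ξ
        rw [← le_div_iff₀ hs0] at *
        exact hj1
      · rw [mem_closedBall]
        refine le_min ?_ hξ
        rw [dist_comm]
        have := (div_lt_iff₀ hs0).mp hj2
        linarith
    calc ENNReal.ofReal (t ^ (α/2)) *
        ∫⁻ ξ in closedBall x ρ, ENNReal.ofReal (heatK n (x - ξ) t) ∂μ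
        ≤ ENNReal.ofReal (t ^ (α/2)) *
          ((∫⁻ ξ in closedBall x s, ENNReal.ofReal (heatK n (x - ξ) t) ∂μ) +
            ∑' j : ℕ, ∫⁻ ξ in A j, ENNReal.ofReal (heatK n (x - ξ) t) ∂μ) := by
          refine mul_le_mul_right ?_ _
          refine le_trans (lintegral_mono_set hcover) ?_
          refine le_trans (lintegral_union_le _ _ _) ?_
          exact add_le_add le_rfl (lintegral_iUnion_le _ _)
      _ ≤ ENNReal.ofReal (t ^ (α/2)) *
          (ENNReal.ofReal (cP * (M * s ^ d)) +
            ∑' j : ℕ, ENNReal.ofReal ((cP * Real.exp (-(4:ℝ)^j/4)) *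
              (M * (min (2^(j+1) * s) ρ) ^ d))) := by
          refine mul_le_mul_right (add_le_add ?_ (ENNReal.tsum_le_tsum fun j => ?_)) _
          · -- core
            calc (∫⁻ ξ in closedBall x s, ENNReal.ofReal (heatK n (x - ξ) t) ∂μ)
                ≤ ∫⁻ _ in closedBall x s, ENNReal.ofReal cP ∂μ := by
                  refine setLIntegral_mono' measurableSet_closedBall fun ξ _ => ?_
                  refine ENNReal.ofReal_le_ofReal ?_
                  rw [hker ξ]
                  refine mul_le_of_le_one_right hcP.le (Real.exp_le_one_iff.mpr ?_)
                  have : (0:ℝ) ≤ ‖x - ξ‖^2 := by positivity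
                  have h4 : (0:ℝ) < 4*t := by linarith
                  rw [neg_div]
                  simp only [Left.neg_nonpos_iff]
                  positivity
              _ = ENNReal.ofReal cP * μ (closedBall x s) := setLIntegral_const _ _
              _ ≤ ENNReal.ofReal cP * ENNReal.ofReal ((M:ℝ) * s ^ d) := by
                  exact mul_le_mul_right (by rw [hd'] at *; exact hdens s hs0 hsε) _
              _ = ENNReal.ofReal (cP * (M * s ^ d)) := by
                  rw [← ENNReal.ofReal_mul hcP.le]
          · -- annulus j
            have hminpos : 0 < min (2^(j+1) * s) ρ := lt_min (by positivity) hρ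
            have hminε : min (2^(j+1) * s) ρ < ε := lt_of_le_of_lt (min_le_right _ _) hρε
            calc (∫⁻ ξ in A j, ENNReal.ofReal (heatK n (x - ξ) t) ∂μ)
                ≤ ∫⁻ _ in A j, ENNReal.ofReal (cP * Real.exp (-(4:ℝ)^j/4)) ∂μ := by
                  refine setLIntegral_mono' (hAmeas j) fun ξ hξ => ?_
                  refine ENNReal.ofReal_le_ofReal ?_
                  rw [hker ξ]
                  refine mul_le_mul_of_nonneg_left (Real.exp_le_exp.mpr ?_) hcP.le
                  have hdist : 2^j * s ≤ dist x ξ := hξ.1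
                  have hnorm : 4^j * t ≤ ‖x - ξ‖^2 := by
                    rw [← dist_eq_norm]
                    have h1 : (2^j * s)^2 ≤ dist x ξ ^ 2 := by
                      refine pow_le_pow_left₀ (by positivity) hdist 2
                    calc (4:ℝ)^j * t = (2^j * s)^2 := by
                          rw [mul_pow, ← pow_mul, mul_comm j 2, pow_mul, hs2]; norm_num
                      _ ≤ _ := h1
                  have h4 : (0:ℝ) < 4*t := by linarith
                  rw [neg_div, neg_div, neg_le_neg_iff]
                  rw [div_le_div_iff₀ (by norm_num) h4]
                  calc (4:ℝ)^j * (4*t) = (4^j * t) * 4 := by ring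
                    _ ≤ ‖x - ξ‖^2 * 4 := by nlinarith
              _ = ENNReal.ofReal (cP * Real.exp (-(4:ℝ)^j/4)) * μ (A j) :=
                  setLIntegral_const _ _
              _ ≤ ENNReal.ofReal (cP * Real.exp (-(4:ℝ)^j/4)) *
                  ENNReal.ofReal ((M:ℝ) * (min (2^(j+1) * s) ρ) ^ d) := by
                  refine mul_le_mul_right ?_ _
                  refine le_trans (measure_mono inter_subset_right) ?_
                  rw [hd'] at *
                  exact hdens _ hminpos hminε
              _ = ENNReal.ofReal ((cP * Real.exp (-(4:ℝ)^j/4)) *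
                  ((M:ℝ) * (min (2^(j+1) * s) ρ) ^ d)) := by
                  rw [← ENNReal.ofReal_mul (by positivity)]
      _ ≤ ENNReal.ofReal (P ^ (-(n:ℝ)/2) * M) * (1 + CS) := by
          rw [mul_add]
          rw [mul_add, mul_one]
          refine add_le_add ?_ ?_
          · rw [← ENNReal.ofReal_mul (by positivity)]
            refine ENNReal.ofReal_le_ofReal ?_
            rw [show t ^ (α/2) * (cP * ((M:ℝ) * s ^ d)) = (t ^ (α/2) * cP * s ^ d) * M by ring,
              hkey]
          · rw [ENNReal.tsum_mul_left.symm]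
            rw [hCSdef, ENNReal.tsum_mul_left.symm]
            refine ENNReal.tsum_le_tsum fun j => ?_
            rw [← ENNReal.ofReal_mul (by positivity), ← ENNReal.ofReal_mul (by positivity)]
            refine ENNReal.ofReal_le_ofReal ?_
            have hmin : (min (2^(j+1) * s) ρ) ^ d ≤ (2^(j+1) * s) ^ d :=
              Real.rpow_le_rpow (le_min (by positivity) hρ.le) (min_le_left _ _) hd
            have hpow : ((2:ℝ)^(j+1) * s) ^ d = (2:ℝ) ^ (((j:ℝ)+1)*d) * s ^ d := by
              rw [Real.mul_rpow (by positivity) hs0.le]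
              congr 1
              rw [← Real.rpow_natCast 2 (j+1), ← Real.rpow_mul (by norm_num)]
              congr 1
              push_cast
              ring
            calc t ^ (α/2) * (cP * Real.exp (-(4:ℝ)^j/4) * ((M:ℝ) * (min (2^(j+1) * s) ρ) ^ d))
                ≤ t ^ (α/2) * (cP * Real.exp (-(4:ℝ)^j/4) * ((M:ℝ) * ((2:ℝ)^(j+1) * s) ^ d)) := by
                  have h0 : (0:ℝ) < Real.exp (-(4:ℝ)^j/4) := Real.exp_pos _
                  refine mul_le_mul_of_nonneg_left ?_ (by positivity)
                  refine mul_le_mul_of_nonneg_left ?_ (by positivity)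
                  exact mul_le_mul_of_nonneg_left hmin (by positivity)
              _ = P ^ (-(n:ℝ)/2) * (M:ℝ) * ((2:ℝ) ^ (((j:ℝ)+1)*d) * Real.exp (-(4:ℝ)^j/4)) := by
                  rw [hpow]
                  rw [show t ^ (α/2) * (cP * Real.exp (-(4:ℝ)^j/4) *
                      ((M:ℝ) * ((2:ℝ) ^ (((j:ℝ)+1)*d) * s ^ d)))
                    = (t ^ (α/2) * cP * s ^ d) * (M:ℝ) *
                        ((2:ℝ) ^ (((j:ℝ)+1)*d) * Real.exp (-(4:ℝ)^j/4)) by ring, hkey]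
  calc ENNReal.ofReal (t ^ (α/2)) *
        (∫⁻ ξ in closedBall x ρ, ENNReal.ofReal (heatK n (x - ξ) t) ∂μ) +
      ENNReal.ofReal (t ^ (α/2)) *
        (∫⁻ ξ in (closedBall x ρ)ᶜ, ENNReal.ofReal (heatK n (x - ξ) t) ∂μ)
      ≤ ENNReal.ofReal (P ^ (-(n:ℝ)/2) * M) * (1 + CS) + 1 := add_le_add hinner houter
    _ = C₀ := by rw [hC₀def, add_comm]



lemma balls_finite (n : ℕ) (μ : Measure (EuclideanSpace ℝ (Fin n)))
    (hfin : ∀ (x : EuclideanSpace ℝ (Fin n)) (t : ℝ), 0 < t →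
      (∫⁻ ξ, ENNReal.ofReal (heatK n (x - ξ) t) ∂μ) ≠ ⊤) :
    ∀ (y : EuclideanSpace ℝ (Fin n)) (R : ℝ), μ (closedBall y R) ≠ ⊤ := by
  have hπ := Real.pi_pos
  intro y R
  have hsub : closedBall y R ⊆ closedBall y (max R 0) :=
    closedBall_subset_closedBall (le_max_left _ _)
  refine ne_top_of_le_ne_top ?_ (measure_mono hsub)
  set R' := max R 0 with hR'
  have hR'0 : 0 ≤ R' := le_max_right _ _
  set c : ℝ := (4 * Real.pi) ^ (-(n:ℝ)/2) * Real.exp (-R'^2/4) with hc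
  have hc0 : 0 < c := by positivity
  have hlow : ENNReal.ofReal c * μ (closedBall y R') ≤
      ∫⁻ ξ, ENNReal.ofReal (heatK n (y - ξ) 1) ∂μ := by
    rw [← setLIntegral_const (closedBall y R') (ENNReal.ofReal c)]
    refine le_trans (setLIntegral_mono' measurableSet_closedBall fun ξ hξ => ?_)
      (setLIntegral_le_lintegral _ _)
    refine ENNReal.ofReal_le_ofReal ?_
    rw [heatK, hc, mul_one]
    have h1 : ‖y - ξ‖ ≤ R' := by
      rw [← dist_eq_norm]
      rw [mem_closedBall, dist_comm] at hξ
      exact hξ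
    refine mul_le_mul_of_nonneg_left (Real.exp_le_exp.mpr ?_) (by positivity)
    have : ‖y - ξ‖^2 ≤ R'^2 := by nlinarith [norm_nonneg (y - ξ)]
    rw [show (4:ℝ)*1 = 4 by norm_num]
    rw [neg_div, neg_div, neg_le_neg_iff]
    linarith
  intro htop
  rw [htop, ENNReal.mul_top (by simp [ENNReal.ofReal_eq_zero, not_le, hc0])] at hlow
  exact hfin y 1 one_pos (eq_top_iff.mpr hlow)

lemma J_finite (n : ℕ) (μ : Measure (EuclideanSpace ℝ (Fin n)))
    (hfin : ∀ (x : EuclideanSpace ℝ (Fin n)) (t : ℝ), 0 < t →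
      (∫⁻ ξ, ENNReal.ofReal (heatK n (x - ξ) t) ∂μ) ≠ ⊤)
    (x : EuclideanSpace ℝ (Fin n)) :
    (∫⁻ ξ, ENNReal.ofReal (Real.exp (-‖x - ξ‖ ^ 2 / 8)) ∂μ) ≠ ⊤ := by
  have hπ := Real.pi_pos
  set c2 : ℝ := (4 * Real.pi * 2) ^ (-(n:ℝ)/2) with hc2
  have hc20 : 0 < c2 := by positivity
  have heq : ∀ ξ : EuclideanSpace ℝ (Fin n),
      ENNReal.ofReal (Real.exp (-‖x - ξ‖ ^ 2 / 8)) =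
        ENNReal.ofReal c2⁻¹ * ENNReal.ofReal (heatK n (x - ξ) 2) := by
    intro ξ
    rw [← ENNReal.ofReal_mul (by positivity), heatK]
    congr 1
    rw [show (4:ℝ)*2 = 8 by norm_num, ← mul_assoc, inv_mul_cancel₀ (ne_of_gt hc20), one_mul]
  calc (∫⁻ ξ, ENNReal.ofReal (Real.exp (-‖x - ξ‖ ^ 2 / 8)) ∂μ)
      = ∫⁻ ξ, ENNReal.ofReal c2⁻¹ * ENNReal.ofReal (heatK n (x - ξ) 2) ∂μ := by
        exact lintegral_congr heq
    _ = ENNReal.ofReal c2⁻¹ * ∫⁻ ξ, ENNReal.ofReal (heatK n (x - ξ) 2) ∂μ :=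
        lintegral_const_mul' _ _ ENNReal.ofReal_ne_top
    _ ≠ ⊤ := ENNReal.mul_ne_top ENNReal.ofReal_ne_top (hfin x 2 two_pos)

theorem stmt4 (n : ℕ) (α : ℝ) (hα : α ∈ Icc (0 : ℝ) n)
    (μ : Measure (EuclideanSpace ℝ (Fin n)))
    (hfin : ∀ (x : EuclideanSpace ℝ (Fin n)) (t : ℝ), 0 < t →
      (∫⁻ ξ, ENNReal.ofReal (heatK n (x - ξ) t) ∂μ) ≠ ⊤) :
    μH[(n : ℝ) - α] {x : EuclideanSpace ℝ (Fin n) |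
        limsup (fun t : ℝ =>
            ENNReal.ofReal (t ^ (α / 2)) *
              ∫⁻ ξ, ENNReal.ofReal (heatK n (x - ξ) t) ∂μ)
          (nhdsWithin 0 (Ioi 0)) = ⊤} = 0 := by
  obtain ⟨hα0, hαn⟩ := hα
  have hb := balls_finite n μ hfin
  have hd : (0:ℝ) ≤ (n:ℝ) - α := by linarith
  refine measure_mono_null ?_ (densitySet_null μ hb ((n:ℝ) - α) hd)
  intro x hx
  simp only [mem_setOf_eq] at hx ⊢
  intro M ε hε
  by_contra hcon
  push_neg at hcon
  refine heat_limsup_ne_top n α hα0 hαn μ x (J_finite n μ hfin x) M ε hε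
    (fun r h1 h2 => (hcon r h1 h2).le) hx
end

section
/- Let E ⊆ ℝⁿ with H^{n−α}(E) = 0 for some α ∈ [0,n). Then there exists a nonnegative function f ∈ L¹(ℝⁿ) such that the heat extension u(x,t) = ∫ (4πt)^{-n/2} exp(-|x-ξ|²/(4t)) f(ξ) dξ satisfies limsup_{t→0⁺} t^{α/2} u(x,t) = +∞ for every x ∈ E. -/
open MeasureTheory Filter Metric Set
open scoped ENNReal NNReal

section aux

lemma exists_cover {X : Type*} [EMetricSpace X] [MeasurableSpace X] [BorelSpace X]
    (p : ℝ) (hp : 0 < p) (E : Set X) (hE : μH[p] E = 0)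
    (ε : ℝ≥0∞) (hε : 0 < ε) :
    ∃ S : ℕ → Set X, E ⊆ ⋃ j, S j ∧ ∑' j, EMetric.diam (S j) ^ p < ε := by
  rw [Measure.hausdorffMeasure_apply] at hE
  have h1 : (⨅ (t : ℕ → Set X) (_ : E ⊆ ⋃ n, t n) (_ : ∀ n, EMetric.diam (t n) ≤ 1),
      ∑' n, ⨆ _ : (t n).Nonempty, EMetric.diam (t n) ^ p) = 0 := by
    refine le_antisymm ?_ zero_le
    rw [← hE]
    exact le_iSup₂ (f := fun (r : ℝ≥0∞) (_ : 0 < r) => ⨅ (t : ℕ → Set X) (_ : E ⊆ ⋃ n, t n)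
      (_ : ∀ n, EMetric.diam (t n) ≤ r), ∑' n, ⨆ _ : (t n).Nonempty, EMetric.diam (t n) ^ p)
      1 zero_lt_one
  have h2 : (⨅ (t : ℕ → Set X) (_ : E ⊆ ⋃ n, t n) (_ : ∀ n, EMetric.diam (t n) ≤ 1),
      ∑' n, ⨆ _ : (t n).Nonempty, EMetric.diam (t n) ^ p) < ε := h1 ▸ hε
  rw [iInf_lt_iff] at h2
  obtain ⟨S, hS⟩ := h2
  rw [iInf_lt_iff] at hS
  obtain ⟨hcov, hS⟩ := hS
  rw [iInf_lt_iff] at hS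
  obtain ⟨-, hS⟩ := hS
  refine ⟨S, hcov, lt_of_le_of_lt ?_ hS⟩
  refine ENNReal.tsum_le_tsum fun j => ?_
  rcases eq_empty_or_nonempty (S j) with h | h
  · simp [h, EMetric.diam_empty, ENNReal.zero_rpow_of_pos hp, hp]
    exact Or.inl EMetric.diam_empty
  · simp [h]

lemma add_rpow_le (p a b : ℝ) (hp : 0 < p) (ha : 0 ≤ a) (hb : 0 ≤ b) :
    (a + b) ^ p ≤ 2 ^ p * (a ^ p + b ^ p) := by
  have h1 : a + b ≤ 2 * max a b := by
    rcases le_total a b with h | h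
    · rw [max_eq_right h]; linarith
    · rw [max_eq_left h]; linarith
  calc (a + b) ^ p ≤ (2 * max a b) ^ p :=
        Real.rpow_le_rpow (by positivity) h1 hp.le
    _ = 2 ^ p * (max a b) ^ p := Real.mul_rpow (by norm_num) (le_max_of_le_left ha)
    _ ≤ 2 ^ p * (a ^ p + b ^ p) := by
        refine mul_le_mul_of_nonneg_left ?_ (by positivity)
        rcases le_total a b with h | h
        · rw [max_eq_right h]
          have := Real.rpow_nonneg ha p; linarith
        · rw [max_eq_left h]
          have := Real.rpow_nonneg hb p; linarith

lemma key_lb (n : ℕ) (hn : 0 < n) (α : ℝ) {c : EuclideanSpace ℝ (Fin n)} {ρ : ℝ} (hρ : 0 < ρ)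
    {w : ℝ} (hw : 0 ≤ w) {f : EuclideanSpace ℝ (Fin n) → ℝ} (hf0 : ∀ ξ, 0 ≤ f ξ)
    (hf : Integrable f)
    (hlow : ∀ᵐ ξ, ξ ∈ ball c ρ → w * ρ ^ (-α) ≤ f ξ)
    {x : EuclideanSpace ℝ (Fin n)} (hx : x ∈ ball c ρ) :
    (4 * Real.pi) ^ (-(n : ℝ) / 2) * Real.exp (-1) *
        (volume (ball (0 : EuclideanSpace ℝ (Fin n)) 1)).toReal * w ≤
      (ρ ^ 2) ^ (α / 2) * ∫ ξ, heatK n (x - ξ) (ρ ^ 2) * f ξ := by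
  haveI : Nonempty (Fin n) := Fin.pos_iff_nonempty.mp hn
  have hπ : 0 < Real.pi := Real.pi_pos
  set t : ℝ := ρ ^ 2 with ht_def
  have ht : 0 < t := by positivity
  set A : ℝ := (4 * Real.pi * t) ^ (-(n : ℝ) / 2) with hA_def
  have hA : 0 < A := Real.rpow_pos_of_pos (by positivity) _
  set κ : ℝ := A * Real.exp (-1) with hκ_def
  have hκ : 0 < κ := by positivity
  set V : ℝ := (volume (ball (0 : EuclideanSpace ℝ (Fin n)) 1)).toReal with hV_def
  have hV : 0 < V := ENNReal.toReal_pos (measure_ball_pos volume _ one_pos).ne'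
    measure_ball_lt_top.ne
  have hker_nonneg : ∀ ξ, 0 ≤ heatK n (x - ξ) t := by
    intro ξ; unfold heatK; positivity
  have hker_le : ∀ ξ, heatK n (x - ξ) t ≤ A := by
    intro ξ; unfold heatK
    rw [← hA_def]
    nth_rewrite 2 [show A = A * 1 by ring]
    refine mul_le_mul_of_nonneg_left ?_ hA.le
    rw [Real.exp_le_one_iff, neg_div]
    have : (0:ℝ) ≤ ‖x - ξ‖ ^ 2 / (4 * t) := by positivity
    linarith
  have hker_cont : Continuous fun ξ : EuclideanSpace ℝ (Fin n) => heatK n (x - ξ) t := by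
    unfold heatK; fun_prop
  have hg_int : Integrable fun ξ => heatK n (x - ξ) t * f ξ := by
    refine hf.bdd_mul hker_cont.aestronglyMeasurable (c := A) (ae_of_all _ fun ξ => ?_)
    rw [Real.norm_eq_abs, abs_of_nonneg (hker_nonneg ξ)]
    exact hker_le ξ
  set h : EuclideanSpace ℝ (Fin n) → ℝ :=
    (ball c ρ).indicator (fun _ => κ * (w * ρ ^ (-α))) with hh_def
  have hh_int : Integrable h := by
    refine (IntegrableOn.integrable_indicator ?_ measurableSet_ball)
    exact integrableOn_const measure_ball_lt_top.ne
  have hmono : h ≤ᵐ[volume] fun ξ => heatK n (x - ξ) t * f ξ := by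
    filter_upwards [hlow] with ξ hξ
    by_cases hb : ξ ∈ ball c ρ
    · rw [hh_def, indicator_of_mem hb]
      have h2 : w * ρ ^ (-α) ≤ f ξ := hξ hb
      have h1 : κ ≤ heatK n (x - ξ) t := by
        unfold heatK
        rw [hκ_def, ← hA_def]
        have hd : ‖x - ξ‖ ≤ 2 * ρ := by
          have hxc : dist x c < ρ := mem_ball.1 hx
          have hcξ : dist c ξ < ρ := by rwa [dist_comm, ← mem_ball]
          calc ‖x - ξ‖ = dist x ξ := (dist_eq_norm x ξ).symm
            _ ≤ dist x c + dist c ξ := dist_triangle x c ξ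
            _ ≤ 2 * ρ := by linarith
        refine mul_le_mul_of_nonneg_left ?_ hA.le
        rw [Real.exp_le_exp]
        rw [neg_div, neg_le_neg_iff, div_le_one (by positivity)]
        calc ‖x - ξ‖ ^ 2 ≤ (2 * ρ) ^ 2 := by
              have := norm_nonneg (x - ξ); nlinarith
          _ = 4 * t := by rw [ht_def]; ring
      calc κ * (w * ρ ^ (-α)) ≤ heatK n (x - ξ) t * (w * ρ ^ (-α)) := by
            have : (0:ℝ) ≤ w * ρ ^ (-α) := by positivity
            exact mul_le_mul_of_nonneg_right h1 this
        _ ≤ heatK n (x - ξ) t * f ξ := mul_le_mul_of_nonneg_left h2 (hker_nonneg ξ)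
    · rw [hh_def, indicator_of_notMem hb]
      exact mul_nonneg (hker_nonneg ξ) (hf0 ξ)
  have hIh : ∫ ξ, h ξ = κ * (w * ρ ^ (-α)) * (ρ ^ n * V) := by
    rw [hh_def, integral_indicator_const _ measurableSet_ball]
    rw [measureReal_def, Measure.addHaar_ball volume c hρ.le, finrank_euclideanSpace_fin]
    rw [ENNReal.toReal_mul, ENNReal.toReal_ofReal (by positivity), ← hV_def]
    rw [smul_eq_mul]; ring
  have hle : ∫ ξ, h ξ ≤ ∫ ξ, heatK n (x - ξ) t * f ξ := integral_mono_ae hh_int hg_int hmono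
  have e0 : (0:ℝ) < 4 * Real.pi := by positivity
  have etα : t ^ (α / 2) = ρ ^ α := by
    rw [ht_def, ← Real.rpow_natCast ρ 2, ← Real.rpow_mul hρ.le]
    congr 1; push_cast; ring
  have etn : A = (4 * Real.pi) ^ (-(n : ℝ) / 2) * ρ ^ (-(n : ℝ)) := by
    rw [hA_def, ht_def, Real.mul_rpow e0.le (sq_nonneg ρ), ← Real.rpow_natCast ρ 2,
      ← Real.rpow_mul hρ.le]
    congr 2
    push_cast; ring
  have e1 : ρ ^ α * ρ ^ (-α) = 1 := by
    rw [← Real.rpow_add hρ]; simp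
  have e2 : ρ ^ (-(n : ℝ)) * ρ ^ (n : ℕ) = 1 := by
    rw [← Real.rpow_natCast ρ n, ← Real.rpow_add hρ]; simp
  calc (4 * Real.pi) ^ (-(n : ℝ) / 2) * Real.exp (-1) * V * w
      = t ^ (α / 2) * (κ * (w * ρ ^ (-α)) * (ρ ^ n * V)) := by
        rw [etα, hκ_def, etn]
        calc (4 * Real.pi) ^ (-(n : ℝ) / 2) * Real.exp (-1) * V * w
            = (ρ ^ α * ρ ^ (-α)) * (ρ ^ (-(n : ℝ)) * (ρ:ℝ) ^ (n:ℕ)) *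
              ((4 * Real.pi) ^ (-(n : ℝ) / 2) * Real.exp (-1) * V * w) := by
              rw [e1, e2]; ring
          _ = ρ ^ α * ((4 * Real.pi) ^ (-(n : ℝ) / 2) * ρ ^ (-(n : ℝ)) * Real.exp (-1) *
              (w * ρ ^ (-α)) * (ρ ^ n * V)) := by ring
    _ ≤ t ^ (α / 2) * ∫ ξ, heatK n (x - ξ) t * f ξ := by
        rw [← hIh] at *
        exact mul_le_mul_of_nonneg_left hle (Real.rpow_nonneg ht.le _)

end aux

theorem stmt11 (n : ℕ) (α : ℝ) (hα : α ∈ Ico (0 : ℝ) n)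
    (E : Set (EuclideanSpace ℝ (Fin n))) (hE : μH[(n : ℝ) - α] E = 0) :
    ∃ f : EuclideanSpace ℝ (Fin n) → ℝ, (∀ ξ, 0 ≤ f ξ) ∧ Integrable f ∧
      ∀ x ∈ E,
        limsup (fun t : ℝ =>
            ENNReal.ofReal (t ^ (α / 2) * ∫ ξ, heatK n (x - ξ) t * f ξ))
          (nhdsWithin 0 (Ioi 0)) = ⊤ := by
  classical
  obtain ⟨hα0, hαn⟩ := hα
  have hn : 0 < n := by exact_mod_cast (hα0.trans_lt hαn)
  haveI : Nonempty (Fin n) := Fin.pos_iff_nonempty.mp hn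
  set p : ℝ := (n : ℝ) - α with hp_def
  have hp : 0 < p := sub_pos.2 hαn
  have hcov : ∀ k : ℕ, ∃ S : ℕ → Set (EuclideanSpace ℝ (Fin n)),
      E ⊆ ⋃ j, S j ∧ ∑' j, EMetric.diam (S j) ^ p < (4 : ℝ≥0∞)⁻¹ ^ k :=
    fun k => exists_cover p hp E hE _ (ENNReal.pow_pos (ENNReal.inv_pos.2 (by norm_num)) k)
  choose S hcovS hsumS using hcov
  have hdiam_le : ∀ k j, EMetric.diam (S k j) ^ p ≤ (4 : ℝ≥0∞)⁻¹ ^ k :=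
    fun k j => (ENNReal.le_tsum j).trans (hsumS k).le
  have hdiam_ne : ∀ k j, EMetric.diam (S k j) ≠ ⊤ := by
    intro k j hT
    have h1 := hdiam_le k j
    rw [hT, ENNReal.top_rpow_of_pos hp, top_le_iff] at h1
    exact ENNReal.pow_ne_top (ENNReal.inv_ne_top.2 (by norm_num)) h1
  set d : ℕ → ℕ → ℝ := fun k j => (EMetric.diam (S k j)).toReal with hd_def
  have hd0 : ∀ k j, 0 ≤ d k j := fun k j => ENNReal.toReal_nonneg
  set η : ℕ → ℕ → ℝ := fun k j => (2 : ℝ) ^ (-((2*k+j+1 : ℕ) : ℝ) / p) with hη_def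
  have hη0 : ∀ k j, 0 < η k j := fun k j => Real.rpow_pos_of_pos two_pos _
  set ρ : ℕ → ℕ → ℝ := fun k j => d k j + η k j with hρ_def
  have hρ0 : ∀ k j, 0 < ρ k j := fun k j => add_pos_of_nonneg_of_pos (hd0 k j) (hη0 k j)
  set ctr : ℕ → ℕ → EuclideanSpace ℝ (Fin n) :=
    fun k j => if h : (S k j).Nonempty then h.some else 0 with hctr_def
  -- real power computations
  have hηp : ∀ k j, η k j ^ p = ((2:ℝ)⁻¹) ^ (2*k+j+1) := by
    intro k j
    simp only [hη_def]
    rw [← Real.rpow_mul (by norm_num : (0:ℝ) ≤ 2), div_mul_cancel₀ _ hp.ne',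
      Real.rpow_neg (by norm_num : (0:ℝ) ≤ 2), Real.rpow_natCast, ← inv_pow]
  have hofη : ∀ k j, ENNReal.ofReal (η k j ^ p) = (2 : ℝ≥0∞)⁻¹ ^ (2*k+j+1) := by
    intro k j
    rw [hηp k j, ENNReal.ofReal_pow (by norm_num), ENNReal.ofReal_inv_of_pos two_pos,
      ENNReal.ofReal_ofNat]
  have hofd : ∀ k j, ENNReal.ofReal (d k j ^ p) = EMetric.diam (S k j) ^ p := by
    intro k j
    simp only [hd_def]
    rw [ENNReal.toReal_rpow, ENNReal.ofReal_toReal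
      (ENNReal.rpow_ne_top_of_nonneg hp.le (hdiam_ne k j))]
  have htwo_inv_sq : ((2 : ℝ≥0∞)⁻¹) ^ 2 = (4 : ℝ≥0∞)⁻¹ := by
    rw [← ENNReal.inv_pow]
    norm_num
  have hsum_η : ∀ k, ∑' j, ENNReal.ofReal (η k j ^ p) = (4 : ℝ≥0∞)⁻¹ ^ k := by
    intro k
    have h1 : ∀ j, ENNReal.ofReal (η k j ^ p) = (2:ℝ≥0∞)⁻¹ ^ (2*k+1) * (2:ℝ≥0∞)⁻¹ ^ j := by
      intro j
      rw [hofη k j, show 2*k+j+1 = (2*k+1)+j by ring, pow_add]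
    rw [tsum_congr h1, ENNReal.tsum_mul_left, ENNReal.tsum_geometric,
      ENNReal.one_sub_inv_two, inv_inv]
    rw [pow_succ, mul_assoc, ENNReal.inv_mul_cancel two_ne_zero ENNReal.ofNat_ne_top, mul_one,
      pow_mul, htwo_inv_sq]
  have hsum_ρ : ∀ k, ∑' j, ENNReal.ofReal (ρ k j ^ p) ≤
      ENNReal.ofReal (2 ^ p) * (2 * (4 : ℝ≥0∞)⁻¹ ^ k) := by
    intro k
    calc ∑' j, ENNReal.ofReal (ρ k j ^ p)
        ≤ ∑' j, (ENNReal.ofReal (2 ^ p) *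
            (ENNReal.ofReal (d k j ^ p) + ENNReal.ofReal (η k j ^ p))) := by
          refine ENNReal.tsum_le_tsum fun j => ?_
          rw [← ENNReal.ofReal_add (by positivity) (by positivity),
            ← ENNReal.ofReal_mul (by positivity)]
          exact ENNReal.ofReal_le_ofReal (add_rpow_le p _ _ hp (hd0 k j) (hη0 k j).le)
      _ = ENNReal.ofReal (2 ^ p) *
            ((∑' j, ENNReal.ofReal (d k j ^ p)) + ∑' j, ENNReal.ofReal (η k j ^ p)) := by
          rw [ENNReal.tsum_mul_left, ENNReal.tsum_add]
      _ ≤ ENNReal.ofReal (2 ^ p) * ((4 : ℝ≥0∞)⁻¹ ^ k + (4 : ℝ≥0∞)⁻¹ ^ k) := by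
          refine mul_le_mul_right (add_le_add ?_ ?_) _
          · rw [tsum_congr (hofd k)]
            exact (hsumS k).le
          · rw [hsum_η k]
      _ = ENNReal.ofReal (2 ^ p) * (2 * (4 : ℝ≥0∞)⁻¹ ^ k) := by rw [two_mul]
  -- the function F
  set term : ℕ × ℕ → EuclideanSpace ℝ (Fin n) → ℝ≥0∞ := fun q =>
    (ball (ctr q.1 q.2) (ρ q.1 q.2)).indicator
      fun _ => ENNReal.ofReal (((q.1 : ℝ) + 1) * ρ q.1 q.2 ^ (-α)) with hterm_def
  have hterm_meas : ∀ q, Measurable (term q) :=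
    fun q => measurable_const.indicator measurableSet_ball
  set F : EuclideanSpace ℝ (Fin n) → ℝ≥0∞ := fun ξ => ∑' q, term q ξ with hF_def
  have hF_meas : Measurable F := Measurable.ennreal_tsum hterm_meas
  set V : ℝ≥0∞ := volume (ball (0 : EuclideanSpace ℝ (Fin n)) 1) with hV_def
  have hVne : V ≠ ⊤ := measure_ball_lt_top.ne
  have hrpn : ∀ k j, ρ k j ^ (-α) * ρ k j ^ (n : ℕ) = ρ k j ^ p := by
    intro k j
    rw [← Real.rpow_natCast (ρ k j) n, ← Real.rpow_add (hρ0 k j)]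
    congr 1
    rw [hp_def]; ring
  have hlint_term : ∀ q : ℕ × ℕ, ∫⁻ ξ, term q ξ =
      ENNReal.ofReal (((q.1 : ℝ) + 1) * ρ q.1 q.2 ^ p) * V := by
    intro q
    simp only [hterm_def]
    rw [lintegral_indicator measurableSet_ball, setLIntegral_const,
      Measure.addHaar_ball volume _ (hρ0 q.1 q.2).le, finrank_euclideanSpace_fin, ← hV_def,
      ← mul_assoc, ← ENNReal.ofReal_mul (by positivity)]
    congr 2
    rw [mul_assoc, hrpn q.1 q.2]
  have hkey : ∀ k : ℕ, ∑' j, ENNReal.ofReal (((k : ℝ) + 1) * ρ k j ^ p) ≤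
      ENNReal.ofReal (2 ^ p) * 2 * ((2 : ℝ≥0∞)⁻¹) ^ k := by
    intro k
    calc ∑' j, ENNReal.ofReal (((k : ℝ) + 1) * ρ k j ^ p)
        = ENNReal.ofReal ((k : ℝ) + 1) * ∑' j, ENNReal.ofReal (ρ k j ^ p) := by
          rw [← ENNReal.tsum_mul_left]
          exact tsum_congr fun j => ENNReal.ofReal_mul (by positivity)
      _ ≤ ((2 : ℝ≥0∞) ^ k) * (ENNReal.ofReal (2 ^ p) * (2 * (4 : ℝ≥0∞)⁻¹ ^ k)) := by
          refine mul_le_mul' ?_ (hsum_ρ k)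
          have h1 : ((k : ℝ) + 1) = ((k + 1 : ℕ) : ℝ) := by push_cast; ring
          rw [h1, ENNReal.ofReal_natCast]
          have h2 : (k + 1 : ℕ) ≤ 2 ^ k := Nat.lt_two_pow_self
          calc ((k + 1 : ℕ) : ℝ≥0∞) ≤ ((2 ^ k : ℕ) : ℝ≥0∞) := by exact_mod_cast h2
            _ = (2 : ℝ≥0∞) ^ k := by push_cast; ring
      _ = ENNReal.ofReal (2 ^ p) * 2 * ((2 : ℝ≥0∞) ^ k * (4 : ℝ≥0∞)⁻¹ ^ k) := by ring
      _ = ENNReal.ofReal (2 ^ p) * 2 * ((2 : ℝ≥0∞)⁻¹) ^ k := by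
          rw [← mul_pow]
          congr 2
          rw [show (4 : ℝ≥0∞) = 2 * 2 by norm_num,
            ENNReal.mul_inv (Or.inl two_ne_zero) (Or.inl ENNReal.ofNat_ne_top), ← mul_assoc,
            ENNReal.mul_inv_cancel two_ne_zero ENNReal.ofNat_ne_top, one_mul]
  have hFlint : ∫⁻ ξ, F ξ < ⊤ := by
    have h1 : ∫⁻ ξ, F ξ = ∑' q : ℕ × ℕ, ∫⁻ ξ, term q ξ := by
      rw [hF_def]
      exact lintegral_tsum fun q => (hterm_meas q).aemeasurable
    rw [h1, tsum_congr hlint_term, ENNReal.tsum_mul_right]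
    have h2 : ∑' q : ℕ × ℕ, ENNReal.ofReal (((q.1 : ℝ) + 1) * ρ q.1 q.2 ^ p) ≤
        ENNReal.ofReal (2 ^ p) * 2 * 2 := by
      rw [show (∑' q : ℕ × ℕ, ENNReal.ofReal (((q.1 : ℝ) + 1) * ρ q.1 q.2 ^ p)) =
          ∑' (k : ℕ) (j : ℕ), ENNReal.ofReal (((k : ℝ) + 1) * ρ k j ^ p) from
          ENNReal.tsum_prod (f := fun (k j : ℕ) => ENNReal.ofReal (((k : ℝ) + 1) * ρ k j ^ p))]
      calc ∑' (k : ℕ) (j : ℕ), ENNReal.ofReal (((k : ℝ) + 1) * ρ k j ^ p)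
          ≤ ∑' k : ℕ, ENNReal.ofReal (2 ^ p) * 2 * ((2 : ℝ≥0∞)⁻¹) ^ k :=
            ENNReal.tsum_le_tsum hkey
        _ = ENNReal.ofReal (2 ^ p) * 2 * ∑' k : ℕ, ((2 : ℝ≥0∞)⁻¹) ^ k := ENNReal.tsum_mul_left
        _ = ENNReal.ofReal (2 ^ p) * 2 * 2 := by
            rw [ENNReal.tsum_geometric, ENNReal.one_sub_inv_two, inv_inv]
    refine lt_of_le_of_lt (mul_le_mul' h2 le_rfl) ?_
    exact ENNReal.mul_lt_top
      (ENNReal.mul_lt_top (ENNReal.mul_lt_top ENNReal.ofReal_lt_top (by norm_num))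
        (by norm_num)) hVne.lt_top
  -- define f
  refine ⟨fun ξ => (F ξ).toReal, fun ξ => ENNReal.toReal_nonneg,
    integrable_toReal_of_lintegral_ne_top hF_meas.aemeasurable hFlint.ne, ?_⟩
  intro x hxE
  choose jx hjx using fun k => mem_iUnion.1 (hcovS k hxE)
  have hS_ne : ∀ k, (S k (jx k)).Nonempty := fun k => ⟨x, hjx k⟩
  have hctr_mem : ∀ k, ctr k (jx k) ∈ S k (jx k) := by
    intro k
    have hc : ctr k (jx k) = (hS_ne k).some := by
      rw [hctr_def]; exact dif_pos (hS_ne k)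
    rw [hc]; exact (hS_ne k).some_mem
  have hx_ball : ∀ k, x ∈ ball (ctr k (jx k)) (ρ k (jx k)) := by
    intro k
    rw [mem_ball, dist_edist]
    calc (edist x (ctr k (jx k))).toReal ≤ d k (jx k) :=
          ENNReal.toReal_mono (hdiam_ne k (jx k))
            (EMetric.edist_le_diam_of_mem (hjx k) (hctr_mem k))
      _ < ρ k (jx k) := by simp only [hρ_def]; linarith [hη0 k (jx k)]
  set C : ℝ := (4 * Real.pi) ^ (-(n : ℝ) / 2) * Real.exp (-1) * V.toReal with hC_def
  have hC : 0 < C := by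
    have hV : 0 < V.toReal := ENNReal.toReal_pos (measure_ball_pos volume _ one_pos).ne' hVne
    have := Real.rpow_pos_of_pos (show (0:ℝ) < 4 * Real.pi by positivity) (-(n : ℝ) / 2)
    positivity
  have hae : ∀ᵐ ξ, F ξ ≠ ⊤ := (ae_lt_top hF_meas hFlint.ne).mono fun ξ h => h.ne
  have hbound : ∀ k : ℕ, C * ((k : ℝ) + 1) ≤
      (ρ k (jx k) ^ 2) ^ (α / 2) * ∫ ξ, heatK n (x - ξ) (ρ k (jx k) ^ 2) * (F ξ).toReal := by
    intro k
    have hlow : ∀ᵐ ξ, ξ ∈ ball (ctr k (jx k)) (ρ k (jx k)) →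
        ((k : ℝ) + 1) * ρ k (jx k) ^ (-α) ≤ (F ξ).toReal := by
      filter_upwards [hae] with ξ hξ hb
      have hterm_le : term (k, jx k) ξ ≤ F ξ := ENNReal.le_tsum _
      have heq : term (k, jx k) ξ =
          ENNReal.ofReal (((k : ℝ) + 1) * ρ k (jx k) ^ (-α)) := by
        simp only [hterm_def]
        exact indicator_of_mem hb _
      calc ((k : ℝ) + 1) * ρ k (jx k) ^ (-α) = (term (k, jx k) ξ).toReal := by
            rw [heq, ENNReal.toReal_ofReal (by positivity)]
        _ ≤ (F ξ).toReal := ENNReal.toReal_mono hξ hterm_le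
    have := key_lb n hn α (hρ0 k (jx k)) (show (0:ℝ) ≤ (k : ℝ) + 1 by positivity)
      (fun ξ => ENNReal.toReal_nonneg)
      (integrable_toReal_of_lintegral_ne_top hF_meas.aemeasurable hFlint.ne)
      hlow (hx_ball k)
    rw [hC_def]
    exact this
  -- the sequence of times
  have hd_le : ∀ k, d k (jx k) ^ p ≤ ((4:ℝ)⁻¹) ^ k := by
    intro k
    have h1 := hdiam_le k (jx k)
    have h2 : (EMetric.diam (S k (jx k)) ^ p).toReal ≤ (((4:ℝ≥0∞)⁻¹) ^ k).toReal :=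
      ENNReal.toReal_mono (ENNReal.pow_ne_top (ENNReal.inv_ne_top.2 (by norm_num))) h1
    rw [← ENNReal.toReal_rpow] at h2
    rwa [ENNReal.toReal_pow, ENNReal.toReal_inv, ENNReal.toReal_ofNat] at h2
  have hη_le : ∀ k, η k (jx k) ^ p ≤ ((4:ℝ)⁻¹) ^ k := by
    intro k
    rw [hηp k (jx k)]
    calc ((2:ℝ)⁻¹) ^ (2*k+(jx k)+1) ≤ ((2:ℝ)⁻¹) ^ (2*k) :=
          pow_le_pow_of_le_one (by norm_num) (by norm_num) (by omega)
      _ = ((4:ℝ)⁻¹) ^ k := by rw [pow_mul]; norm_num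
  have hρp_le : ∀ k, ρ k (jx k) ^ p ≤ 2 ^ p * 2 * ((4:ℝ)⁻¹) ^ k := by
    intro k
    calc ρ k (jx k) ^ p ≤ 2 ^ p * (d k (jx k) ^ p + η k (jx k) ^ p) :=
          add_rpow_le p _ _ hp (hd0 k (jx k)) (hη0 k (jx k)).le
      _ ≤ 2 ^ p * (((4:ℝ)⁻¹) ^ k + ((4:ℝ)⁻¹) ^ k) := by
          refine mul_le_mul_of_nonneg_left (add_le_add (hd_le k) (hη_le k)) (by positivity)
      _ = 2 ^ p * 2 * ((4:ℝ)⁻¹) ^ k := by ring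
  have hρ_le : ∀ k, ρ k (jx k) ≤ (2 ^ p * 2) ^ p⁻¹ * (((4:ℝ)⁻¹ ^ p⁻¹)) ^ k := by
    intro k
    have h1 : ρ k (jx k) = (ρ k (jx k) ^ p) ^ p⁻¹ := by
      rw [← Real.rpow_mul (hρ0 k (jx k)).le, mul_inv_cancel₀ hp.ne', Real.rpow_one]
    rw [h1]
    calc (ρ k (jx k) ^ p) ^ p⁻¹ ≤ (2 ^ p * 2 * ((4:ℝ)⁻¹) ^ k) ^ p⁻¹ :=
          Real.rpow_le_rpow (Real.rpow_nonneg (hρ0 k (jx k)).le p) (hρp_le k)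
            (inv_nonneg.2 hp.le)
      _ = (2 ^ p * 2) ^ p⁻¹ * (((4:ℝ)⁻¹) ^ k) ^ p⁻¹ :=
          Real.mul_rpow (by positivity) (by positivity)
      _ = (2 ^ p * 2) ^ p⁻¹ * (((4:ℝ)⁻¹ ^ p⁻¹)) ^ k := by
          congr 1
          rw [← Real.rpow_natCast ((4:ℝ)⁻¹) k, ← Real.rpow_mul (by norm_num),
            mul_comm (k:ℝ) p⁻¹, Real.rpow_mul (by norm_num), Real.rpow_natCast]
  have hρ_tend : Tendsto (fun k => ρ k (jx k)) atTop (nhds 0) := by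
    have hr1 : (0:ℝ) ≤ (4:ℝ)⁻¹ ^ p⁻¹ := Real.rpow_nonneg (by norm_num) _
    have hr2 : (4:ℝ)⁻¹ ^ p⁻¹ < 1 :=
      Real.rpow_lt_one (by norm_num) (by norm_num) (inv_pos.2 hp)
    have h1 : Tendsto (fun k : ℕ => (2 ^ p * 2) ^ p⁻¹ * (((4:ℝ)⁻¹ ^ p⁻¹)) ^ k) atTop (nhds 0) := by
      have := (tendsto_pow_atTop_nhds_zero_of_lt_one hr1 hr2).const_mul ((2 ^ p * 2:ℝ) ^ p⁻¹)
      simpa using this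
    exact squeeze_zero (fun k => (hρ0 k (jx k)).le) hρ_le h1
  have htseq : Tendsto (fun k => ρ k (jx k) ^ 2) atTop (nhdsWithin 0 (Ioi 0)) := by
    rw [tendsto_nhdsWithin_iff]
    constructor
    · have h2 := hρ_tend.mul hρ_tend
      rw [mul_zero] at h2
      exact h2.congr fun k => (pow_two _).symm
    · exact Eventually.of_forall fun k => by
        have := hρ0 k (jx k); exact mem_Ioi.2 (by positivity)
  -- conclude
  refine ENNReal.eq_top_of_forall_nnreal_le fun M => ?_
  refine le_limsup_of_frequently_le' ?_
  refine htseq.frequently ?_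
  obtain ⟨K, hK⟩ := exists_nat_ge ((M : ℝ) / C)
  refine Eventually.frequently ?_
  filter_upwards [eventually_ge_atTop K] with k hk
  have h1 : (M : ℝ) ≤ C * ((k : ℝ) + 1) := by
    rw [div_le_iff₀ hC] at hK
    have h2 : (K : ℝ) ≤ (k : ℝ) + 1 := by
      have : (K : ℝ) ≤ (k : ℝ) := by exact_mod_cast hk
      linarith
    nlinarith
  calc (M : ℝ≥0∞) = ENNReal.ofReal (M : ℝ) := (ENNReal.ofReal_coe_nnreal).symm
    _ ≤ _ := ENNReal.ofReal_le_ofReal (h1.trans (hbound k))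
end
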